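/- arXiv:2404.04865 — 2 statements merged into one kernel-verified Lean document; each statement's English description precedes it below -/
import Mathlib

section
/- Let R be a ranking function space, 𝒟 a domain space, and let D_XY = β·D_I + (1−β)·D_O and D_XY' = β'·D_I + (1−β')·D_O' be domains in 𝒟 sharing the same ID joint distribution D_I. Suppose D_{X_I} = ∫ g_I dμ, D_{X_O} = ∫ g_O dμ and D_{X_O}' = ∫ g_O' dμ for densities with respect to a common measure μ on X, and set P = {x : g_I(x) > 0 and g_O(x) > 0} and P' = {x : g_I(x) > 0 and g_O'(x) > 0}. If sup_{r∈R} AUC(r; D_{X_I}, D_{X_O}) = sup_{r∈R_all} AUC(r; D_{X_I}, D_{X_O}) and sup_{r∈R} AUC(r; D_{X_I}, D_{X_O}') = sup_{r∈R_all} AUC(r; D_{X_I}, D_{X_O}'), where R_all is the space of all measurable functions X → ℝ, and D_{X_I}(P ∩ P') < min{D_{X_I}(P), D_{X_I}(P')}, then the linear condition under AUC fails for this pair, i.e., there exists α ∈ [0,1) with α·sup_{r∈R} AUC(r; D_{X_I}, D_{X_O}) + (1−α)·sup_{r∈R} AUC(r; D_{X_I}, D_{X_O}') ≠ sup_{r∈R}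 AUC(r; D_{X_I}, α·D_{X_O} + (1−α)·D_{X_O}'); consequently, OOD detection is not learnable under AUC in 𝒟 for R. -/
open MeasureTheory Filter Set
open scoped ENNReal NNReal

noncomputable section

namespace OODF

/-- A *domain*: a mixture `(1-π)·D_I + π·D_O` of an ID joint distribution `D_I` on
`𝒳 × {1,…,K}` and an OOD joint distribution `D_O` on `𝒳 × {K+1}`, with class prior
`π ∈ [0,1)`.  Labels are encoded as naturals: ID labels are `{1,…,K}`, OOD label is `K+1`. -/
structure Domain (𝒳 : Type*) [MeasurableSpace 𝒳] (K : ℕ) where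
  DI : Measure (𝒳 × ℕ)
  DO : Measure (𝒳 × ℕ)
  prior : ℝ
  probI : IsProbabilityMeasure DI
  probO : IsProbabilityMeasure DO
  suppI : DI {p | p.2 ∉ Set.Icc 1 K} = 0
  suppO : DO {p | p.2 ≠ K + 1} = 0
  prior_mem : prior ∈ Set.Ico (0 : ℝ) 1

variable {𝒳 : Type*} [MeasurableSpace 𝒳] {K : ℕ}

namespace Domain

/-- the mixed joint distribution `D_XY = (1-π)·D_I + π·D_O` -/
def joint (D : Domain 𝒳 K) : Measure (𝒳 × ℕ) :=
  ENNReal.ofReal (1 - D.prior) • D.DI + ENNReal.ofReal D.prior • D.DO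

/-- the marginal `D_{X_I}` of the ID joint distribution on the feature space -/
def margI (D : Domain 𝒳 K) : Measure 𝒳 := D.DI.map Prod.fst

/-- the marginal `D_{X_O}` of the OOD joint distribution on the feature space -/
def margO (D : Domain 𝒳 K) : Measure 𝒳 := D.DO.map Prod.fst

/-- the domain `D^α = (1-α)·D_I + α·D_O`, i.e. `D` with its class prior replaced by `α` -/
def withPrior (D : Domain 𝒳 K) (α : Set.Ico (0 : ℝ) 1) : Domain 𝒳 K :=
  { D with prior := α.1, prior_mem := α.2 }

end Domain

/-- a prior-unknown domain space: closed under changing the class prior -/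
def PriorUnknown (𝒟 : Set (Domain 𝒳 K)) : Prop :=
  ∀ D ∈ 𝒟, ∀ α : Set.Ico (0 : ℝ) 1, D.withPrior α ∈ 𝒟

/-- the risk `R_D(h)` w.r.t. the mixed joint distribution -/
def risk (ℓ : ℕ → ℕ → ℝ) (D : Domain 𝒳 K) (h : 𝒳 → ℕ) : ℝ :=
  ∫ p, ℓ (h p.1) p.2 ∂D.joint

/-- the ID risk `R_D^in(h)` -/
def riskIn (ℓ : ℕ → ℕ → ℝ) (D : Domain 𝒳 K) (h : 𝒳 → ℕ) : ℝ :=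
  ∫ p, ℓ (h p.1) p.2 ∂D.DI

/-- the OOD risk `R_D^out(h)` -/
def riskOut (ℓ : ℕ → ℕ → ℝ) (D : Domain 𝒳 K) (h : 𝒳 → ℕ) : ℝ :=
  ∫ p, ℓ (h p.1) (K + 1) ∂D.DO

/-- the `α`-risk `R_D^α(h) = (1-α)·R_D^in(h) + α·R_D^out(h)` -/
def riskA (ℓ : ℕ → ℕ → ℝ) (D : Domain 𝒳 K) (h : 𝒳 → ℕ) (α : ℝ) : ℝ :=
  (1 - α) * riskIn ℓ D h + α * riskOut ℓ D h

/-- the distribution of an i.i.d. sample of size `n` from the ID joint distribution -/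
def sampleMeasure (D : Domain 𝒳 K) (n : ℕ) : Measure (Fin n → 𝒳 × ℕ) :=
  letI := D.probI
  Measure.pi fun _ => D.DI

/-- An algorithm maps, for every sample size `n ≥ 1`, a labeled sample to a function on `𝒳`. -/
abbrev Algorithm (𝒳 β : Type*) := (n : ℕ) → (Fin n → 𝒳 × ℕ) → (𝒳 → β)

/-- `A` is consistent w.r.t. `𝒟` under risk with rate `ε`: it outputs hypotheses in `H`,
the resulting risks are measurable in the sample, and the expected excess risk for samples
of size `n ≥ 1` is at most `ε n`. -/
def ConsistentRisk (ℓ : ℕ → ℕ → ℝ) (𝒟 : Set (Domain 𝒳 K)) (H : Set (𝒳 → ℕ))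
    (A : Algorithm 𝒳 ℕ) (ε : ℕ → ℝ) : Prop :=
  (∀ n : ℕ, 1 ≤ n → ∀ S, A n S ∈ H) ∧
  (∀ D ∈ 𝒟, ∀ n : ℕ, 1 ≤ n → Measurable fun S : Fin n → 𝒳 × ℕ => risk ℓ D (A n S)) ∧
  ∀ D ∈ 𝒟, ∀ n : ℕ, 1 ≤ n →
    ∫ S, (risk ℓ D (A n S) - ⨅ h : H, risk ℓ D h.1) ∂(sampleMeasure D n) ≤ ε n

/-- OOD detection is learnable under risk in `𝒟` for `H` with the given rate. -/
def LearnableRiskRate (ℓ : ℕ → ℕ → ℝ) (𝒟 : Set (Domain 𝒳 K)) (H : Set (𝒳 → ℕ))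
    (ε : ℕ → ℝ) : Prop :=
  ∃ A, ConsistentRisk ℓ 𝒟 H A ε

/-- learnability of OOD detection under risk -/
def LearnableRisk (ℓ : ℕ → ℕ → ℝ) (𝒟 : Set (Domain 𝒳 K)) (H : Set (𝒳 → ℕ)) : Prop :=
  ∃ ε : ℕ → ℝ, Antitone ε ∧ Tendsto ε atTop (nhds 0) ∧ LearnableRiskRate ℓ 𝒟 H ε

/-- `A` is strongly consistent: the expected excess `α`-risks are uniformly small over
all `α ∈ [0,1]`. -/
def StrongConsistentRisk (ℓ : ℕ → ℕ → ℝ) (𝒟 : Set (Domain 𝒳 K)) (H : Set (𝒳 → ℕ))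
    (A : Algorithm 𝒳 ℕ) (ε : ℕ → ℝ) : Prop :=
  (∀ n : ℕ, 1 ≤ n → ∀ S, A n S ∈ H) ∧
  (∀ D ∈ 𝒟, ∀ n : ℕ, 1 ≤ n → ∀ α : ℝ,
    Measurable fun S : Fin n → 𝒳 × ℕ => riskA ℓ D (A n S) α) ∧
  ∀ D ∈ 𝒟, ∀ n : ℕ, 1 ≤ n → ∀ α ∈ Set.Icc (0 : ℝ) 1,
    ∫ S, (riskA ℓ D (A n S) α - ⨅ h : H, riskA ℓ D h.1 α) ∂(sampleMeasure D n) ≤ ε n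

/-- strong learnability of OOD detection under risk -/
def StrongLearnableRisk (ℓ : ℕ → ℕ → ℝ) (𝒟 : Set (Domain 𝒳 K)) (H : Set (𝒳 → ℕ)) : Prop :=
  ∃ ε : ℕ → ℝ, Antitone ε ∧ Tendsto ε atTop (nhds 0) ∧
    ∃ A, StrongConsistentRisk ℓ 𝒟 H A ε

/-- the AUC of a ranking function `r` w.r.t. ID marginal `P` and OOD marginal `Q`:
`AUC(r) = E_{x ~ P} E_{x' ~ Q} [1_{r(x) > r(x')} + (1/2)·1_{r(x) = r(x')}]` -/
def AUC (r : 𝒳 → ℝ) (P Q : Measure 𝒳) : ℝ :=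
  ∫ x, (∫ x', ((if r x' < r x then (1 : ℝ) else 0) +
      (1 / 2) * (if r x = r x' then (1 : ℝ) else 0)) ∂Q) ∂P

/-- `A` is AUC-consistent w.r.t. `𝒟` with rate `ε`. -/
def ConsistentAUC (𝒟 : Set (Domain 𝒳 K)) (R : Set (𝒳 → ℝ))
    (A : Algorithm 𝒳 ℝ) (ε : ℕ → ℝ) : Prop :=
  (∀ n : ℕ, 1 ≤ n → ∀ S, A n S ∈ R) ∧
  (∀ D ∈ 𝒟, ∀ n : ℕ, 1 ≤ n →
    Measurable fun S : Fin n → 𝒳 × ℕ => AUC (A n S) D.margI D.margO) ∧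
  ∀ D ∈ 𝒟, ∀ n : ℕ, 1 ≤ n →
    ∫ S, ((⨆ r : R, AUC r.1 D.margI D.margO) - AUC (A n S) D.margI D.margO)
      ∂(sampleMeasure D n) ≤ ε n

/-- OOD detection is learnable under AUC in `𝒟` for `R` with the given rate. -/
def LearnableAUCRate (𝒟 : Set (Domain 𝒳 K)) (R : Set (𝒳 → ℝ)) (ε : ℕ → ℝ) : Prop :=
  ∃ A, ConsistentAUC 𝒟 R A ε

/-- learnability of OOD detection under AUC -/
def LearnableAUC (𝒟 : Set (Domain 𝒳 K)) (R : Set (𝒳 → ℝ)) : Prop :=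
  ∃ ε : ℕ → ℝ, Antitone ε ∧ Tendsto ε atTop (nhds 0) ∧ LearnableAUCRate 𝒟 R ε

/-- the (topological) support of a measure -/
def mSupport {α : Type*} [TopologicalSpace α] [MeasurableSpace α] (μ : Measure α) : Set α :=
  {x | ∀ U ∈ nhds x, 0 < μ U}

/-- the separate space `𝒟^s`: all domains whose ID and OOD marginals have disjoint supports -/
def separateSpace (𝒳 : Type*) [MeasurableSpace 𝒳] [TopologicalSpace 𝒳] (K : ℕ) :
    Set (Domain 𝒳 K) :=
  {D | mSupport D.margO ∩ mSupport D.margI = ∅}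

/-- a class `G` of binary functions (encoded as predicates) shatters the finite set `C` -/
def Shatters {α : Type*} (G : Set (α → Prop)) (C : Finset α) : Prop :=
  ∀ f : α → Prop, ∃ g ∈ G, ∀ x ∈ C, g x ↔ f x

/-- the VC dimension of a class of binary functions (encoded as predicates) -/
def VCdim {α : Type*} (G : Set (α → Prop)) : ℕ∞ :=
  sSup {n : ℕ∞ | ∃ C : Finset α, Shatters G C ∧ n = (C.card : ℕ∞)}

section AuxAUC

variable {Ω : Type*} [MeasurableSpace Ω]

/-- misranking kernel: `1` if `r x < r x'`, `1/2` if tie, `0` otherwise -/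
def G (r : Ω → ℝ) (x x' : Ω) : ℝ :=
  (if r x < r x' then (1 : ℝ) else 0) + (1 / 2) * (if r x = r x' then (1 : ℝ) else 0)

lemma G_nonneg (r : Ω → ℝ) (x x' : Ω) : 0 ≤ G r x x' := by
  unfold G; split_ifs <;> norm_num

lemma G_le_one (r : Ω → ℝ) (x x' : Ω) : G r x x' ≤ 1 := by
  unfold G
  rcases lt_trichotomy (r x) (r x') with h | h | h
  · simp [h, ne_of_lt h]
  · norm_num [h, lt_irrefl]
  · simp [not_lt.2 h.le, ne_of_gt h]

lemma G_add (r : Ω → ℝ) (x x' : Ω) : G r x x' + G r x' x = 1 := by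
  unfold G
  rcases lt_trichotomy (r x) (r x') with h | h | h
  · simp [h, asymm h, ne_of_lt h, ne_of_gt h]
  · norm_num [h, lt_irrefl]
  · simp [h, asymm h, ne_of_lt h, ne_of_gt h]

lemma G_meas {r : Ω → ℝ} (hr : Measurable r) :
    Measurable (fun p : Ω × Ω => G r p.1 p.2) := by
  apply Measurable.add
  · exact Measurable.ite
      (measurableSet_lt (hr.comp measurable_fst) (hr.comp measurable_snd))
      measurable_const measurable_const
  · exact measurable_const.mul (Measurable.ite
      (measurableSet_eq_fun (hr.comp measurable_fst) (hr.comp measurable_snd))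
      measurable_const measurable_const)

lemma G_meas_left {r : Ω → ℝ} (hr : Measurable r) (x : Ω) :
    Measurable (fun x' => G r x x') :=
  (G_meas hr).comp (measurable_const.prodMk measurable_id)

lemma G_integrable {r : Ω → ℝ} (hr : Measurable r) (x : Ω) (Q : Measure Ω)
    [IsFiniteMeasure Q] : Integrable (fun x' => G r x x') Q := by
  refine (integrable_const (1 : ℝ)).mono' (G_meas_left hr x).aestronglyMeasurable ?_
  filter_upwards with x'
  rw [Real.norm_eq_abs, abs_of_nonneg (G_nonneg r x x')]
  exact G_le_one r x x'

lemma inner_nonneg {r : Ω → ℝ} (x : Ω) (Q : Measure Ω) :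
    0 ≤ ∫ x', G r x x' ∂Q :=
  integral_nonneg fun x' => G_nonneg r x x'

lemma inner_le {r : Ω → ℝ} (hr : Measurable r) (x : Ω) (Q : Measure Ω)
    [IsFiniteMeasure Q] (hQ1 : Q Set.univ ≤ 1) : ∫ x', G r x x' ∂Q ≤ 1 := by
  calc ∫ x', G r x x' ∂Q ≤ ∫ _, (1 : ℝ) ∂Q :=
        integral_mono (G_integrable hr x Q) (integrable_const 1) fun x' => G_le_one r x x'
    _ = (Q Set.univ).toReal := by simp; rfl
    _ ≤ 1 := by
        have := ENNReal.toReal_mono (by norm_num) hQ1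
        simpa using this

lemma inner_meas {r : Ω → ℝ} (hr : Measurable r) (Q : Measure Ω) [SFinite Q] :
    StronglyMeasurable fun x => ∫ x', G r x x' ∂Q :=
  (G_meas hr).stronglyMeasurable.integral_prod_right'

lemma inner_integrable {r : Ω → ℝ} (hr : Measurable r) (P Q : Measure Ω)
    [IsFiniteMeasure P] [IsFiniteMeasure Q] (hQ1 : Q Set.univ ≤ 1) :
    Integrable (fun x => ∫ x', G r x x' ∂Q) P := by
  refine (integrable_const (1 : ℝ)).mono'
    (inner_meas hr Q).aestronglyMeasurable ?_
  filter_upwards with x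
  rw [Real.norm_eq_abs, abs_of_nonneg (inner_nonneg x Q)]
  exact inner_le hr x Q hQ1

/-- the misranking loss -/
def Lfun (r : Ω → ℝ) (P Q : Measure Ω) : ℝ := ∫ x, ∫ x', G r x x' ∂Q ∂P

lemma Lfun_nonneg (r : Ω → ℝ) (P Q : Measure Ω) : 0 ≤ Lfun r P Q :=
  integral_nonneg fun x => inner_nonneg x Q

lemma Lfun_le_one {r : Ω → ℝ} (hr : Measurable r) (P Q : Measure Ω)
    [IsProbabilityMeasure P] [IsProbabilityMeasure Q] : Lfun r P Q ≤ 1 := by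
  have h1 : Q Set.univ ≤ 1 := le_of_eq measure_univ
  calc Lfun r P Q ≤ ∫ _, (1 : ℝ) ∂P :=
        integral_mono (inner_integrable hr P Q h1) (integrable_const 1)
          fun x => inner_le hr x Q h1
    _ = 1 := by simp

lemma AUC_eq_one_sub {r : Ω → ℝ} (hr : Measurable r) (P Q : Measure Ω)
    [IsProbabilityMeasure P] [IsProbabilityMeasure Q] :
    AUC r P Q = 1 - Lfun r P Q := by
  have h1 : Q Set.univ ≤ 1 := le_of_eq measure_univ
  have hpt : ∀ x x', ((if r x' < r x then (1 : ℝ) else 0)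
      + (1 / 2) * (if r x = r x' then (1 : ℝ) else 0)) = 1 - G r x x' := by
    intro x x'
    have hadd := G_add r x x'
    have : G r x' x = (if r x' < r x then (1 : ℝ) else 0)
        + (1 / 2) * (if r x = r x' then (1 : ℝ) else 0) := by
      unfold G
      congr 1
      congr 1
      simp [eq_comm]
    linarith [this ▸ hadd]
  have hinner : ∀ x, (∫ x', ((if r x' < r x then (1 : ℝ) else 0)
      + (1 / 2) * (if r x = r x' then (1 : ℝ) else 0)) ∂Q)
      = 1 - ∫ x', G r x x' ∂Q := by
    intro x
    rw [show (fun x' => (if r x' < r x then (1 : ℝ) else 0)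
        + (1 / 2) * (if r x = r x' then (1 : ℝ) else 0))
        = fun x' => 1 - G r x x' from funext fun x' => hpt x x']
    rw [integral_sub (integrable_const 1) (G_integrable hr x Q)]
    simp
  unfold AUC Lfun
  rw [show (fun x => (∫ x', ((if r x' < r x then (1 : ℝ) else 0)
      + (1 / 2) * (if r x = r x' then (1 : ℝ) else 0)) ∂Q))
      = fun x => 1 - ∫ x', G r x x' ∂Q from funext hinner]
  rw [integral_sub (integrable_const 1) (inner_integrable hr P Q h1)]
  simp

lemma AUC_nonneg {r : Ω → ℝ} (hr : Measurable r) (P Q : Measure Ω)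
    [IsProbabilityMeasure P] [IsProbabilityMeasure Q] : 0 ≤ AUC r P Q := by
  rw [AUC_eq_one_sub hr]
  linarith [Lfun_le_one hr P Q]

lemma AUC_le_one {r : Ω → ℝ} (hr : Measurable r) (P Q : Measure Ω)
    [IsProbabilityMeasure P] [IsProbabilityMeasure Q] : AUC r P Q ≤ 1 := by
  rw [AUC_eq_one_sub hr]
  linarith [Lfun_nonneg r P Q]

lemma AUC_const_zero (P Q : Measure Ω) [IsProbabilityMeasure P] [IsProbabilityMeasure Q] :
    AUC (fun _ => (0 : ℝ)) P Q = 1 / 2 := by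
  unfold AUC
  simp

/-- lower bound of the loss by its overlap part plus a cross part -/
lemma L_ge_parts {r : Ω → ℝ} (hr : Measurable r) (P Q : Measure Ω)
    [IsProbabilityMeasure P] [IsProbabilityMeasure Q]
    {S U V : Set Ω} (hS : MeasurableSet S) (hU : MeasurableSet U) (hV : MeasurableSet V)
    (hdisj : Disjoint S U) :
    (∫ x in S, ∫ x' in S, G r x x' ∂Q ∂P) + (∫ x in U, ∫ x' in V, G r x x' ∂Q ∂P)
      ≤ Lfun r P Q := by
  have h1 : Q Set.univ ≤ 1 := le_of_eq measure_univ
  have hWle : ∀ (W : Set Ω) (x : Ω), (∫ x' in W, G r x x' ∂Q) ≤ ∫ x', G r x x' ∂Q :=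
    fun W x => integral_mono_measure Measure.restrict_le_self
      (ae_of_all _ fun x' => G_nonneg r x x') (G_integrable hr x Q)
  have hWQ1 : ∀ W : Set Ω, (Q.restrict W) Set.univ ≤ 1 := by
    intro W
    calc (Q.restrict W) Set.univ = Q W := Measure.restrict_apply_univ W
      _ ≤ Q Set.univ := measure_mono (Set.subset_univ W)
      _ ≤ 1 := h1
  have hint : Integrable (fun x => ∫ x', G r x x' ∂Q) P :=
    inner_integrable hr P Q h1
  have hintW : ∀ (W : Set Ω) (P' : Measure Ω), IsFiniteMeasure P' →
      Integrable (fun x => ∫ x' in W, G r x x' ∂Q) P' := by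
    intro W P' hP'
    exact inner_integrable hr P' (Q.restrict W) (hWQ1 W)
  have step1 : (∫ x in S, ∫ x' in S, G r x x' ∂Q ∂P)
      ≤ ∫ x in S, ∫ x', G r x x' ∂Q ∂P :=
    integral_mono (hintW S (P.restrict S) inferInstance) hint.restrict fun x => hWle S x
  have step2 : (∫ x in U, ∫ x' in V, G r x x' ∂Q ∂P)
      ≤ ∫ x in U, ∫ x', G r x x' ∂Q ∂P :=
    integral_mono (hintW V (P.restrict U) inferInstance) hint.restrict fun x => hWle V x
  have step3 : (∫ x in S, ∫ x', G r x x' ∂Q ∂P) + (∫ x in U, ∫ x', G r x x' ∂Q ∂P)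
      = ∫ x in S ∪ U, ∫ x', G r x x' ∂Q ∂P :=
    (setIntegral_union hdisj hU hint.integrableOn hint.integrableOn).symm
  have step4 : (∫ x in S ∪ U, ∫ x', G r x x' ∂Q ∂P) ≤ Lfun r P Q :=
    integral_mono_measure Measure.restrict_le_self
      (ae_of_all _ fun x => inner_nonneg x Q) hint
  linarith

/-- the extension construction: given any measurable `f`, there is a measurable ranking
whose total loss equals the overlap part of the loss of `f` -/
lemma exists_good_r {μ : Measure Ω} {gI gO : Ω → ℝ≥0∞}
    (hgI : Measurable gI) (hgO : Measurable gO)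
    (P Q : Measure Ω) [IsProbabilityMeasure P] [IsProbabilityMeasure Q]
    (hP : P = μ.withDensity gI) (hQ : Q = μ.withDensity gO)
    (f : Ω → ℝ) (hf : Measurable f) :
    ∃ r : Ω → ℝ, Measurable r ∧
      Lfun r P Q
        = ∫ x in {y | 0 < gI y ∧ 0 < gO y}, ∫ x' in {y | 0 < gI y ∧ 0 < gO y},
            G f x x' ∂Q ∂P := by
  classical
  set S : Set Ω := {y | 0 < gI y ∧ 0 < gO y} with hSdef
  have hS : MeasurableSet S :=
    (hgI measurableSet_Ioi).inter (hgO measurableSet_Ioi)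
  set r : Ω → ℝ := fun x => if x ∈ S then Real.arctan (f x)
      else if 0 < gI x then (10 : ℝ) else (-10 : ℝ) with hrdef
  have hrm : Measurable r := by
    refine Measurable.ite hS (Real.measurable_arctan.comp hf)
      (Measurable.ite (hgI measurableSet_Ioi)
        measurable_const measurable_const)
  have hr1 : ∀ x ∈ S, r x = Real.arctan (f x) := fun x hx => by simp [hrdef, hx]
  have hr2 : ∀ x, x ∉ S → 0 < gI x → r x = 10 := fun x hx h => by simp [hrdef, hx, h]
  have hr3 : ∀ x, x ∉ S → ¬ 0 < gI x → r x = -10 := fun x hx h => by simp [hrdef, hx, h]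
  have harcb : ∀ t : ℝ, -10 < Real.arctan t ∧ Real.arctan t < 10 := by
    intro t
    have h1 := Real.neg_pi_div_two_lt_arctan t
    have h2 := Real.arctan_lt_pi_div_two t
    have h3 := Real.pi_le_four
    have h4 := Real.pi_pos
    constructor <;> nlinarith
  -- a.e. facts
  have haeP : ∀ᵐ x ∂P, 0 < gI x := by
    rw [ae_iff]
    have hmeq : {x | ¬ 0 < gI x} = gI ⁻¹' {0} := by
      ext x; simp [pos_iff_ne_zero]
    rw [hP, hmeq, withDensity_apply gI (hgI (measurableSet_singleton 0))]
    have : ∫⁻ a in gI ⁻¹' {0}, gI a ∂μ = ∫⁻ _ in gI ⁻¹' {0}, 0 ∂μ :=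
      setLIntegral_congr_fun (hgI (measurableSet_singleton 0))
        (fun a ha => ha)
    simp [this]
  have haeQ : ∀ᵐ x ∂Q, 0 < gO x := by
    rw [ae_iff]
    have hmeq : {x | ¬ 0 < gO x} = gO ⁻¹' {0} := by
      ext x; simp [pos_iff_ne_zero]
    rw [hQ, hmeq, withDensity_apply gO (hgO (measurableSet_singleton 0))]
    have : ∫⁻ a in gO ⁻¹' {0}, gO a ∂μ = ∫⁻ _ in gO ⁻¹' {0}, 0 ∂μ :=
      setLIntegral_congr_fun (hgO (measurableSet_singleton 0))
        (fun a ha => ha)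
    simp [this]
  refine ⟨r, hrm, ?_⟩
  have hinner : ∀ x, 0 < gI x →
      (∫ x', G r x x' ∂Q) = S.indicator (fun x0 => ∫ x' in S, G f x0 x' ∂Q) x := by
    intro x hgIx
    by_cases hx : x ∈ S
    · rw [Set.indicator_of_mem hx]
      have hcong : ∀ᵐ x' ∂Q, G r x x' = S.indicator (fun x' => G f x x') x' := by
        filter_upwards [haeQ] with x' hx'
        by_cases hx'S : x' ∈ S
        · rw [Set.indicator_of_mem hx'S]
          unfold G
          rw [hr1 x hx, hr1 x' hx'S]
          congr 1
          · congr 1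
            simp [Real.arctan_strictMono.lt_iff_lt]
          · congr 1
            simp [Real.arctan_injective.eq_iff]
        · rw [Set.indicator_of_notMem hx'S]
          have hgI0 : ¬ 0 < gI x' := fun h => hx'S ⟨h, hx'⟩
          unfold G
          rw [hr1 x hx, hr3 x' hx'S hgI0]
          have hb := harcb (f x)
          rw [if_neg (by linarith [hb.1]), if_neg (by intro h; linarith [hb.1])]
          norm_num
      rw [integral_congr_ae hcong, integral_indicator hS]
    · rw [Set.indicator_of_notMem hx]
      have hzero : ∀ᵐ x' ∂Q, G r x x' = 0 := by
        filter_upwards [haeQ] with x' hx'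
        have hrx : r x = 10 := hr2 x hx hgIx
        by_cases hx'S : x' ∈ S
        · have hb := harcb (f x')
          unfold G
          rw [hrx, hr1 x' hx'S]
          rw [if_neg (by linarith [hb.2]), if_neg (by intro h; linarith [hb.2])]
          norm_num
        · have hgI0 : ¬ 0 < gI x' := fun h => hx'S ⟨h, hx'⟩
          unfold G
          rw [hrx, hr3 x' hx'S hgI0]
          norm_num
      rw [integral_congr_ae hzero]
      simp
  have houter : ∀ᵐ x ∂P,
      (∫ x', G r x x' ∂Q) = S.indicator (fun x0 => ∫ x' in S, G f x0 x' ∂Q) x := by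
    filter_upwards [haeP] with x hx using hinner x hx
  unfold Lfun
  rw [integral_congr_ae houter, integral_indicator hS]

lemma G_integrable' {r : Ω → ℝ} (hr : Measurable r) (x' : Ω) (Q : Measure Ω)
    [IsFiniteMeasure Q] : Integrable (fun x => G r x x') Q := by
  have hm : Measurable (fun x => G r x x') :=
    (G_meas hr).comp (measurable_id.prodMk measurable_const)
  refine (integrable_const (1 : ℝ)).mono' hm.aestronglyMeasurable ?_
  filter_upwards with x
  rw [Real.norm_eq_abs, abs_of_nonneg (G_nonneg r x x')]
  exact G_le_one r x x'

lemma inner_meas' {r : Ω → ℝ} (hr : Measurable r) (Q : Measure Ω) [SFinite Q] :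
    StronglyMeasurable fun a => ∫ b, G r b a ∂Q :=
  StronglyMeasurable.integral_prod_right'
    (f := fun p : Ω × Ω => G r p.2 p.1) ((G_meas hr).comp measurable_swap).stronglyMeasurable

lemma inner_integrable' {r : Ω → ℝ} (hr : Measurable r) (P Q : Measure Ω)
    [IsFiniteMeasure P] [IsFiniteMeasure Q] (hQ1 : Q Set.univ ≤ 1) :
    Integrable (fun a => ∫ b, G r b a ∂Q) P := by
  refine (integrable_const (1 : ℝ)).mono' (inner_meas' hr Q).aestronglyMeasurable ?_
  filter_upwards with a
  have h0 : 0 ≤ ∫ b, G r b a ∂Q := integral_nonneg fun b => G_nonneg r b a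
  rw [Real.norm_eq_abs, abs_of_nonneg h0]
  calc ∫ b, G r b a ∂Q ≤ ∫ _, (1 : ℝ) ∂Q :=
        integral_mono (G_integrable' hr a Q) (integrable_const 1) fun b => G_le_one r b a
    _ = (Q Set.univ).toReal := by simp; rfl
    _ ≤ 1 := by simpa using ENNReal.toReal_mono (by norm_num) hQ1

/-- linearity of the AUC in the second measure, for the `1/2`-`1/2` mixture -/
lemma AUC_mix {r : Ω → ℝ} (hr : Measurable r) (P Q Q' : Measure Ω)
    [IsProbabilityMeasure P] [IsProbabilityMeasure Q] [IsProbabilityMeasure Q'] :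
    AUC r P (ENNReal.ofReal (1 / 2) • Q + ENNReal.ofReal (1 / 2) • Q')
      = (1 / 2) * AUC r P Q + (1 / 2) * AUC r P Q' := by
  have h1 : Q Set.univ ≤ 1 := le_of_eq measure_univ
  have h1' : Q' Set.univ ≤ 1 := le_of_eq measure_univ
  haveI hfin : IsFiniteMeasure (ENNReal.ofReal (1 / 2 : ℝ) • Q) := ⟨by
    rw [Measure.smul_apply, smul_eq_mul, measure_univ, mul_one]
    exact ENNReal.ofReal_lt_top⟩
  haveI hfin' : IsFiniteMeasure (ENNReal.ofReal (1 / 2 : ℝ) • Q') := ⟨by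
    rw [Measure.smul_apply, smul_eq_mul, measure_univ, mul_one]
    exact ENNReal.ofReal_lt_top⟩
  haveI hmix : IsProbabilityMeasure
      (ENNReal.ofReal (1 / 2 : ℝ) • Q + ENNReal.ofReal (1 / 2 : ℝ) • Q') := ⟨by
    simp only [Measure.add_apply, Measure.smul_apply, smul_eq_mul, measure_univ, mul_one]
    rw [← ENNReal.ofReal_add (by norm_num) (by norm_num)]
    norm_num⟩
  have hL : Lfun r P (ENNReal.ofReal (1 / 2) • Q + ENNReal.ofReal (1 / 2) • Q')
      = (1 / 2) * Lfun r P Q + (1 / 2) * Lfun r P Q' := by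
    have hinner : ∀ x, (∫ x', G r x x' ∂(ENNReal.ofReal (1 / 2) • Q
        + ENNReal.ofReal (1 / 2) • Q'))
        = (1 / 2) * (∫ x', G r x x' ∂Q) + (1 / 2) * ∫ x', G r x x' ∂Q' := by
      intro x
      rw [integral_add_measure (G_integrable hr x _) (G_integrable hr x _),
        integral_smul_measure, integral_smul_measure,
        ENNReal.toReal_ofReal (by norm_num : (0:ℝ) ≤ 1/2)]
      simp [smul_eq_mul]
    unfold Lfun
    rw [show (fun x => ∫ x', G r x x' ∂(ENNReal.ofReal (1 / 2) • Q
        + ENNReal.ofReal (1 / 2) • Q'))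
        = fun x => (1 / 2) * (∫ x', G r x x' ∂Q) + (1 / 2) * ∫ x', G r x x' ∂Q'
        from funext hinner]
    rw [integral_add ((inner_integrable hr P Q h1).const_mul _)
      ((inner_integrable hr P Q' h1').const_mul _), integral_const_mul, integral_const_mul]
  rw [AUC_eq_one_sub hr, AUC_eq_one_sub hr, AUC_eq_one_sub hr, hL]
  ring

/-- the key uniform gap: no single measurable ranking can be simultaneously near-optimal
for both OOD marginals -/
lemma key_gap {μ : Measure Ω} {gI gO gO' : Ω → ℝ≥0∞}
    (hgI : Measurable gI) (hgO : Measurable gO) (hgO' : Measurable gO')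
    (P Q Q' : Measure Ω)
    [IsProbabilityMeasure P] [IsProbabilityMeasure Q] [IsProbabilityMeasure Q']
    (hP : P = μ.withDensity gI) (hQ : Q = μ.withDensity gO) (hQ' : Q' = μ.withDensity gO')
    (hover : P ({x | 0 < gI x ∧ 0 < gO x} ∩ {x | 0 < gI x ∧ 0 < gO' x})
        < min (P {x | 0 < gI x ∧ 0 < gO x}) (P {x | 0 < gI x ∧ 0 < gO' x})) :
    ∃ c : ℝ, 0 < c ∧ ∀ r : Ω → ℝ, Measurable r →
      c ≤ ((⨆ r0 : {r0 : Ω → ℝ // Measurable r0}, AUC r0.1 P Q) - AUC r P Q)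
        + ((⨆ r0 : {r0 : Ω → ℝ // Measurable r0}, AUC r0.1 P Q') - AUC r P Q') := by
  classical
  haveI : Nonempty {r0 : Ω → ℝ // Measurable r0} := ⟨⟨fun _ => 0, measurable_const⟩⟩
  set S : Set Ω := {x | 0 < gI x ∧ 0 < gO x} with hSdef
  set S' : Set Ω := {x | 0 < gI x ∧ 0 < gO' x} with hS'def
  have hS : MeasurableSet S := (hgI measurableSet_Ioi).inter (hgO measurableSet_Ioi)
  have hS' : MeasurableSet S' := (hgI measurableSet_Ioi).inter (hgO' measurableSet_Ioi)
  set T : Set Ω := S \ S' with hTdef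
  set T' : Set Ω := S' \ S with hT'def
  have hT : MeasurableSet T := hS.diff hS'
  have hT' : MeasurableSet T' := hS'.diff hS
  have hPT : 0 < P T := by
    rcases (show (0 : ℝ≥0∞) ≤ P T from zero_le).lt_or_eq with h | h
    · exact h
    exfalso
    have hsub : S ⊆ (S ∩ S') ∪ T := by
      intro x hx
      by_cases hx' : x ∈ S'
      · exact Or.inl ⟨hx, hx'⟩
      · exact Or.inr ⟨hx, hx'⟩
    have : P S ≤ P (S ∩ S') + P T :=
      le_trans (measure_mono hsub) (measure_union_le _ _)
    rw [← h, add_zero] at this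
    exact absurd this (not_le.2 (lt_min_iff.1 hover).1)
  have hPT' : 0 < P T' := by
    rcases (show (0 : ℝ≥0∞) ≤ P T' from zero_le).lt_or_eq with h | h
    · exact h
    exfalso
    have hsub : S' ⊆ (S ∩ S') ∪ T' := by
      intro x hx
      by_cases hx' : x ∈ S
      · exact Or.inl ⟨hx', hx⟩
      · exact Or.inr ⟨hx, hx'⟩
    have : P S' ≤ P (S ∩ S') + P T' :=
      le_trans (measure_mono hsub) (measure_union_le _ _)
    rw [← h, add_zero] at this
    exact absurd this (not_le.2 (lt_min_iff.1 hover).2)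
  -- minorizing measures
  set ν : Measure Ω := μ.withDensity (T.indicator (gI ⊓ gO)) with hνdef
  set ν' : Measure Ω := μ.withDensity (T'.indicator (gI ⊓ gO')) with hν'def
  have hν_eq : ν = (μ.restrict T).withDensity (gI ⊓ gO) := withDensity_indicator hT _
  have hν'_eq : ν' = (μ.restrict T').withDensity (gI ⊓ gO') := withDensity_indicator hT' _
  have hν_leQ : ν ≤ Q.restrict T := by
    rw [hQ, restrict_withDensity hT, hν_eq]
    exact withDensity_mono (ae_of_all _ fun x => inf_le_right)
  have hν_leP : ν ≤ P.restrict T := by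
    rw [hP, restrict_withDensity hT, hν_eq]
    exact withDensity_mono (ae_of_all _ fun x => inf_le_left)
  have hν'_leQ : ν' ≤ Q'.restrict T' := by
    rw [hQ', restrict_withDensity hT', hν'_eq]
    exact withDensity_mono (ae_of_all _ fun x => inf_le_right)
  have hν'_leP : ν' ≤ P.restrict T' := by
    rw [hP, restrict_withDensity hT', hν'_eq]
    exact withDensity_mono (ae_of_all _ fun x => inf_le_left)
  have hνuniv : ν Set.univ ≤ 1 := by
    calc ν Set.univ ≤ (Q.restrict T) Set.univ := Measure.le_iff'.1 hν_leQ _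
      _ = Q T := Measure.restrict_apply_univ T
      _ ≤ 1 := prob_le_one
  have hν'univ : ν' Set.univ ≤ 1 := by
    calc ν' Set.univ ≤ (Q'.restrict T') Set.univ := Measure.le_iff'.1 hν'_leQ _
      _ = Q' T' := Measure.restrict_apply_univ T'
      _ ≤ 1 := prob_le_one
  haveI hνfin : IsFiniteMeasure ν := ⟨lt_of_le_of_lt hνuniv ENNReal.one_lt_top⟩
  haveI hν'fin : IsFiniteMeasure ν' := ⟨lt_of_le_of_lt hν'univ ENNReal.one_lt_top⟩
  -- positivity of the minorizing masses
  have hνpos : 0 < ν Set.univ := by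
    rcases (show (0 : ℝ≥0∞) ≤ ν Set.univ from zero_le).lt_or_eq with h | h
    · exact h
    exfalso
    have hν_univ_eq : ν Set.univ = ∫⁻ x in T, (gI ⊓ gO) x ∂μ := by
      rw [hνdef, withDensity_apply _ MeasurableSet.univ, Measure.restrict_univ,
        lintegral_indicator hT]
    have hae : ∀ᵐ x ∂μ.restrict T, (gI ⊓ gO) x = 0 := by
      have h0 : ∫⁻ x in T, (gI ⊓ gO) x ∂μ = 0 := by rw [← hν_univ_eq, ← h]
      have := (lintegral_eq_zero_iff (hgI.inf hgO)).1 h0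
      filter_upwards [this] with x hx using hx
    have hμT : μ T = 0 := by
      have hsub : T ⊆ {x | ¬ (gI ⊓ gO) x = 0} := by
        intro x hx
        have h1 : (0 : ℝ≥0∞) < gI x := hx.1.1
        have h2 : (0 : ℝ≥0∞) < gO x := hx.1.2
        simp only [Set.mem_setOf_eq, Pi.inf_apply]
        exact (lt_min h1 h2).ne'
      refine le_zero_iff.1 ?_
      calc μ T = (μ.restrict T) T := (Measure.restrict_apply_self μ T).symm
        _ ≤ (μ.restrict T) {x | ¬ (gI ⊓ gO) x = 0} := measure_mono hsub
        _ = 0 := ae_iff.1 hae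
    have : P T = 0 := by
      rw [hP, withDensity_apply _ hT, Measure.restrict_eq_zero.2 hμT]
      simp
    exact absurd this hPT.ne'
  have hν'pos : 0 < ν' Set.univ := by
    rcases (show (0 : ℝ≥0∞) ≤ ν' Set.univ from zero_le).lt_or_eq with h | h
    · exact h
    exfalso
    have hν'_univ_eq : ν' Set.univ = ∫⁻ x in T', (gI ⊓ gO') x ∂μ := by
      rw [hν'def, withDensity_apply _ MeasurableSet.univ, Measure.restrict_univ,
        lintegral_indicator hT']
    have hae : ∀ᵐ x ∂μ.restrict T', (gI ⊓ gO') x = 0 := by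
      have h0 : ∫⁻ x in T', (gI ⊓ gO') x ∂μ = 0 := by rw [← hν'_univ_eq, ← h]
      have := (lintegral_eq_zero_iff (hgI.inf hgO')).1 h0
      filter_upwards [this] with x hx using hx
    have hμT' : μ T' = 0 := by
      have hsub : T' ⊆ {x | ¬ (gI ⊓ gO') x = 0} := by
        intro x hx
        have h1 : (0 : ℝ≥0∞) < gI x := hx.1.1
        have h2 : (0 : ℝ≥0∞) < gO' x := hx.1.2
        simp only [Set.mem_setOf_eq, Pi.inf_apply]
        exact (lt_min h1 h2).ne'
      refine le_zero_iff.1 ?_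
      calc μ T' = (μ.restrict T') T' := (Measure.restrict_apply_self μ T').symm
        _ ≤ (μ.restrict T') {x | ¬ (gI ⊓ gO') x = 0} := measure_mono hsub
        _ = 0 := ae_iff.1 hae
    have : P T' = 0 := by
      rw [hP, withDensity_apply _ hT', Measure.restrict_eq_zero.2 hμT']
      simp
    exact absurd this hPT'.ne'
  set c : ℝ := (ν Set.univ).toReal * (ν' Set.univ).toReal with hcdef
  have hcpos : 0 < c :=
    mul_pos (ENNReal.toReal_pos hνpos.ne' (lt_of_le_of_lt hνuniv ENNReal.one_lt_top).ne)
      (ENNReal.toReal_pos hν'pos.ne' (lt_of_le_of_lt hν'univ ENNReal.one_lt_top).ne)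
  -- suprema bounds
  have hbdd : BddAbove (Set.range fun r0 : {r0 : Ω → ℝ // Measurable r0} => AUC r0.1 P Q) := by
    refine ⟨1, ?_⟩
    rintro _ ⟨r0, rfl⟩
    exact AUC_le_one r0.2 P Q
  have hbdd' : BddAbove (Set.range fun r0 : {r0 : Ω → ℝ // Measurable r0} => AUC r0.1 P Q') := by
    refine ⟨1, ?_⟩
    rintro _ ⟨r0, rfl⟩
    exact AUC_le_one r0.2 P Q'
  set msup : ℝ := ⨆ r0 : {r0 : Ω → ℝ // Measurable r0}, AUC r0.1 P Q with hmsupdef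
  set msup' : ℝ := ⨆ r0 : {r0 : Ω → ℝ // Measurable r0}, AUC r0.1 P Q' with hmsup'def
  set Jf : {r0 : Ω → ℝ // Measurable r0} → ℝ :=
    fun r0 => ∫ x in S, ∫ x' in S, G r0.1 x x' ∂Q ∂P with hJfdef
  set Jf' : {r0 : Ω → ℝ // Measurable r0} → ℝ :=
    fun r0 => ∫ x in S', ∫ x' in S', G r0.1 x x' ∂Q' ∂P with hJf'def
  have hbddJ : BddBelow (Set.range Jf) := by
    refine ⟨0, ?_⟩
    rintro _ ⟨r0, rfl⟩
    exact integral_nonneg fun x => integral_nonneg fun x' => G_nonneg _ x x'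
  have hbddJ' : BddBelow (Set.range Jf') := by
    refine ⟨0, ?_⟩
    rintro _ ⟨r0, rfl⟩
    exact integral_nonneg fun x => integral_nonneg fun x' => G_nonneg _ x x'
  set mS : ℝ := ⨅ r0, Jf r0 with hmSdef
  set mS' : ℝ := ⨅ r0, Jf' r0 with hmS'def
  have hsup_ge : 1 - mS ≤ msup := by
    have h1 : ∀ r0 : {r0 : Ω → ℝ // Measurable r0}, 1 - msup ≤ Jf r0 := by
      intro r0
      obtain ⟨r, hrm, hre⟩ := exists_good_r hgI hgO P Q hP hQ r0.1 r0.2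
      have hA : AUC r P Q = 1 - Jf r0 := by
        rw [AUC_eq_one_sub hrm, hre]
      have hle : AUC r P Q ≤ msup := le_ciSup hbdd ⟨r, hrm⟩
      linarith [hA ▸ hle]
    linarith [le_ciInf h1]
  have hsup_ge' : 1 - mS' ≤ msup' := by
    have h1 : ∀ r0 : {r0 : Ω → ℝ // Measurable r0}, 1 - msup' ≤ Jf' r0 := by
      intro r0
      obtain ⟨r, hrm, hre⟩ := exists_good_r hgI hgO' P Q' hP hQ' r0.1 r0.2
      have hA : AUC r P Q' = 1 - Jf' r0 := by
        rw [AUC_eq_one_sub hrm, hre]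
      have hle : AUC r P Q' ≤ msup' := le_ciSup hbdd' ⟨r, hrm⟩
      linarith [hA ▸ hle]
    linarith [le_ciInf h1]
  refine ⟨c, hcpos, ?_⟩
  intro r hr
  -- the cross terms
  set Cr : ℝ := ∫ x in T', ∫ x' in T, G r x x' ∂Q ∂P with hCrdef
  set Cr' : ℝ := ∫ x in T, ∫ x' in T', G r x x' ∂Q' ∂P with hCr'def
  have hgap : Cr ≤ msup - AUC r P Q := by
    have hLparts : Jf ⟨r, hr⟩ + Cr ≤ Lfun r P Q :=
      L_ge_parts hr P Q hS hT' hT disjoint_sdiff_self_right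
    have hJm : mS ≤ Jf ⟨r, hr⟩ := ciInf_le hbddJ _
    have hAr : AUC r P Q = 1 - Lfun r P Q := AUC_eq_one_sub hr P Q
    linarith
  have hgap' : Cr' ≤ msup' - AUC r P Q' := by
    have hLparts : Jf' ⟨r, hr⟩ + Cr' ≤ Lfun r P Q' :=
      L_ge_parts hr P Q' hS' hT hT' disjoint_sdiff_self_right
    have hJm : mS' ≤ Jf' ⟨r, hr⟩ := ciInf_le hbddJ' _
    have hAr : AUC r P Q' = 1 - Lfun r P Q' := AUC_eq_one_sub hr P Q'
    linarith
  -- lower bound the cross terms by the minorizing measures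
  have hQT1 : (Q.restrict T) Set.univ ≤ 1 := by
    rw [Measure.restrict_apply_univ]
    exact prob_le_one
  have hQ'T'1 : (Q'.restrict T') Set.univ ≤ 1 := by
    rw [Measure.restrict_apply_univ]
    exact prob_le_one
  have hcross1 : (∫ x, ∫ x', G r x x' ∂ν ∂ν') ≤ Cr := by
    have hinner : ∀ x, (∫ x', G r x x' ∂ν) ≤ ∫ x' in T, G r x x' ∂Q := fun x =>
      integral_mono_measure hν_leQ (ae_of_all _ fun x' => G_nonneg r x x')
        (G_integrable hr x (Q.restrict T))
    calc (∫ x, ∫ x', G r x x' ∂ν ∂ν') ≤ ∫ x, ∫ x' in T, G r x x' ∂Q ∂ν' :=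
          integral_mono (inner_integrable hr ν' ν hνuniv)
            (inner_integrable hr ν' (Q.restrict T) hQT1) hinner
      _ ≤ Cr :=
          integral_mono_measure hν'_leP (ae_of_all _ fun x => inner_nonneg x _)
            (inner_integrable hr (P.restrict T') (Q.restrict T) hQT1)
  have hcross2 : (∫ x, ∫ x', G r x x' ∂ν' ∂ν) ≤ Cr' := by
    have hinner : ∀ x, (∫ x', G r x x' ∂ν') ≤ ∫ x' in T', G r x x' ∂Q' := fun x =>
      integral_mono_measure hν'_leQ (ae_of_all _ fun x' => G_nonneg r x x')
        (G_integrable hr x (Q'.restrict T'))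
    calc (∫ x, ∫ x', G r x x' ∂ν' ∂ν) ≤ ∫ x, ∫ x' in T', G r x x' ∂Q' ∂ν :=
          integral_mono (inner_integrable hr ν ν' hν'univ)
            (inner_integrable hr ν (Q'.restrict T') hQ'T'1) hinner
      _ ≤ Cr' :=
          integral_mono_measure hν_leP (ae_of_all _ fun x => inner_nonneg x _)
            (inner_integrable hr (P.restrict T) (Q'.restrict T') hQ'T'1)
  -- symmetrization
  have hGprod : Integrable (Function.uncurry fun x x' => G r x x') (ν'.prod ν) := by
    refine (integrable_const (1 : ℝ)).mono' (G_meas hr).aestronglyMeasurable ?_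
    filter_upwards with p
    rw [Function.uncurry, Real.norm_eq_abs, abs_of_nonneg (G_nonneg r p.1 p.2)]
    exact G_le_one r p.1 p.2
  have hswap : (∫ x, ∫ x', G r x x' ∂ν ∂ν') = ∫ a, ∫ b, G r b a ∂ν' ∂ν :=
    integral_integral_swap hGprod
  have hsum : (∫ a, ∫ b, G r b a ∂ν' ∂ν) + (∫ a, ∫ b, G r a b ∂ν' ∂ν) = c := by
    rw [← integral_add (inner_integrable' hr ν ν' hν'univ) (inner_integrable hr ν ν' hν'univ)]
    have hpt : ∀ a, (∫ b, G r b a ∂ν') + (∫ b, G r a b ∂ν') = (ν' Set.univ).toReal := by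
      intro a
      rw [← integral_add (G_integrable' hr a ν') (G_integrable hr a ν')]
      rw [show (fun b => G r b a + G r a b) = fun _ => (1 : ℝ)
        from funext fun b => G_add r b a]
      simp; rfl
    rw [show (fun a => (∫ b, G r b a ∂ν') + ∫ b, G r a b ∂ν')
      = fun _ => (ν' Set.univ).toReal from funext hpt]
    rw [integral_const, hcdef, smul_eq_mul]
    rfl
  linarith [hswap ▸ hcross1, hcross2]

end AuxAUC

/-- Lemma 4 / `T5_auc` of the paper.  Suppose `D, D' ∈ 𝒟` share the same
ID joint distribution and have marginals with densities `g_I, g_O, g_O'` w.r.t. a common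
measure `μ`, the suprema of the AUC over `R` coincide with the suprema over all measurable
ranking functions for both OOD marginals, and the ID mass of the intersection of the two
overlap sets is smaller than the ID mass of each.  Then the linear condition under AUC
fails, and OOD detection is not learnable under AUC in `𝒟` for `R`. -/
theorem stmt7 {d K : ℕ} (X : Set (EuclideanSpace ℝ (Fin d)))
    (R : Set (↥X → ℝ)) (hR : ∀ r ∈ R, Measurable r)
    (𝒟 : Set (Domain ↥X K))
    (D D' : Domain ↥X K) (hD : D ∈ 𝒟) (hD' : D' ∈ 𝒟) (hsame : D.DI = D'.DI)
    (μ : Measure ↥X) (gI gO gO' : ↥X → ℝ≥0∞)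
    (hgI : Measurable gI) (hgO : Measurable gO) (hgO' : Measurable gO')
    (hdI : D.margI = μ.withDensity gI)
    (hdO : D.margO = μ.withDensity gO)
    (hdO' : D'.margO = μ.withDensity gO')
    (hsup : (⨆ r : R, AUC r.1 D.margI D.margO)
        = ⨆ r : {r : ↥X → ℝ // Measurable r}, AUC r.1 D.margI D.margO)
    (hsup' : (⨆ r : R, AUC r.1 D.margI D'.margO)
        = ⨆ r : {r : ↥X → ℝ // Measurable r}, AUC r.1 D.margI D'.margO)
    (hover : D.margI ({x | 0 < gI x ∧ 0 < gO x} ∩ {x | 0 < gI x ∧ 0 < gO' x})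
        < min (D.margI {x | 0 < gI x ∧ 0 < gO x}) (D.margI {x | 0 < gI x ∧ 0 < gO' x})) :
    (∃ α ∈ Set.Ico (0 : ℝ) 1,
        α * (⨆ r : R, AUC r.1 D.margI D.margO)
            + (1 - α) * (⨆ r : R, AUC r.1 D.margI D'.margO)
          ≠ ⨆ r : R, AUC r.1 D.margI
              (ENNReal.ofReal α • D.margO + ENNReal.ofReal (1 - α) • D'.margO)) ∧
    ¬ LearnableAUC 𝒟 R := by
  classical
  haveI hprobI : IsProbabilityMeasure D.DI := D.probI
  haveI hprobO : IsProbabilityMeasure D.DO := D.probO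
  haveI hprobI' : IsProbabilityMeasure D'.DI := D'.probI
  haveI hprobO' : IsProbabilityMeasure D'.DO := D'.probO
  haveI hPI : IsProbabilityMeasure D.margI :=
    Measure.isProbabilityMeasure_map measurable_fst.aemeasurable
  haveI hPO : IsProbabilityMeasure D.margO :=
    Measure.isProbabilityMeasure_map measurable_fst.aemeasurable
  haveI hPO' : IsProbabilityMeasure D'.margO :=
    Measure.isProbabilityMeasure_map measurable_fst.aemeasurable
  obtain ⟨c, hc, hkey⟩ := key_gap hgI hgO hgO' D.margI D.margO D'.margO hdI hdO hdO' hover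
  haveI hne : Nonempty {r0 : ↥X → ℝ // Measurable r0} := ⟨⟨fun _ => 0, measurable_const⟩⟩
  have hbddmeas : BddAbove (Set.range
      fun r0 : {r0 : ↥X → ℝ // Measurable r0} => AUC r0.1 D.margI D.margO) := by
    refine ⟨1, ?_⟩
    rintro _ ⟨r0, rfl⟩
    exact AUC_le_one r0.2 _ _
  have hRne : Nonempty ↥R := by
    rcases isEmpty_or_nonempty ↥R with hRe | h
    · exfalso
      have h0 : (⨆ r : R, AUC r.1 D.margI D.margO) = 0 := Real.iSup_of_isEmpty _
      have hhalf : (1 / 2 : ℝ)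
          ≤ ⨆ r0 : {r0 : ↥X → ℝ // Measurable r0}, AUC r0.1 D.margI D.margO := by
        have := le_ciSup hbddmeas
          (⟨fun _ => 0, measurable_const⟩ : {r0 : ↥X → ℝ // Measurable r0})
        rwa [AUC_const_zero] at this
      rw [hsup] at h0
      linarith
    · exact h
  haveI := hRne
  have hmeasR : ∀ r : R, Measurable r.1 := fun r => hR r.1 r.2
  have hgapR : ∀ r : R,
      c ≤ ((⨆ r : R, AUC r.1 D.margI D.margO) - AUC r.1 D.margI D.margO)
        + ((⨆ r : R, AUC r.1 D.margI D'.margO) - AUC r.1 D.margI D'.margO) := by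
    intro r
    rw [hsup, hsup']
    exact hkey r.1 (hmeasR r)
  constructor
  · refine ⟨1 / 2, ⟨by norm_num, by norm_num⟩, ?_⟩
    have h12 : (1 - 1 / 2 : ℝ) = 1 / 2 := by norm_num
    rw [h12]
    have hRHS : (⨆ r : R, AUC r.1 D.margI
        (ENNReal.ofReal (1 / 2) • D.margO + ENNReal.ofReal (1 / 2) • D'.margO))
        ≤ (1 / 2) * (⨆ r : R, AUC r.1 D.margI D.margO)
          + (1 / 2) * (⨆ r : R, AUC r.1 D.margI D'.margO) - (1 / 2) * c := by
      refine ciSup_le fun r => ?_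
      rw [AUC_mix (hmeasR r)]
      have := hgapR r
      linarith
    intro heq
    rw [← heq] at hRHS
    linarith
  · rintro ⟨ε, hmono, htend, Alg, hmem, hmeasA, hbound⟩
    have hmargI : D'.margI = D.margI := by
      unfold Domain.margI
      rw [hsame]
    have hsm : ∀ n, sampleMeasure D' n = sampleMeasure D n := by
      intro n
      unfold sampleMeasure
      rw [hsame]
    have hkeyn : ∀ n, 1 ≤ n → c ≤ 2 * ε n := by
      intro n hn
      haveI : IsProbabilityMeasure (sampleMeasure D n) := by
        unfold sampleMeasure
        infer_instance
      have h1 := hbound D hD n hn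
      have h2 := hbound D' hD' n hn
      rw [hmargI, hsm n] at h2
      set g1 : (Fin n → ↥X × ℕ) → ℝ := fun S =>
        (⨆ r : R, AUC r.1 D.margI D.margO) - AUC (Alg n S) D.margI D.margO with hg1
      set g2 : (Fin n → ↥X × ℕ) → ℝ := fun S =>
        (⨆ r : R, AUC r.1 D.margI D'.margO) - AUC (Alg n S) D.margI D'.margO with hg2
      have hm1 : Measurable g1 := measurable_const.sub (hmeasA D hD n hn)
      have hm2 : Measurable g2 := by
        have h := hmeasA D' hD' n hn
        rw [hmargI] at h
        exact measurable_const.sub h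
      have hint1 : Integrable g1 (sampleMeasure D n) := by
        refine (integrable_const (|(⨆ r : R, AUC r.1 D.margI D.margO)| + 1)).mono'
          hm1.aestronglyMeasurable (ae_of_all _ fun S => ?_)
        have hrm := hR _ (hmem n hn S)
        have h0 := AUC_nonneg hrm D.margI D.margO
        have hle := AUC_le_one hrm D.margI D.margO
        rw [hg1, Real.norm_eq_abs]
        calc |(⨆ r : R, AUC r.1 D.margI D.margO) - AUC (Alg n S) D.margI D.margO|
            ≤ |(⨆ r : R, AUC r.1 D.margI D.margO)| + |AUC (Alg n S) D.margI D.margO| :=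
              abs_sub _ _
          _ ≤ |(⨆ r : R, AUC r.1 D.margI D.margO)| + 1 := by
              have : |AUC (Alg n S) D.margI D.margO| ≤ 1 := abs_le.2 ⟨by linarith, hle⟩
              linarith
      have hint2 : Integrable g2 (sampleMeasure D n) := by
        refine (integrable_const (|(⨆ r : R, AUC r.1 D.margI D'.margO)| + 1)).mono'
          hm2.aestronglyMeasurable (ae_of_all _ fun S => ?_)
        have hrm := hR _ (hmem n hn S)
        have h0 := AUC_nonneg hrm D.margI D'.margO
        have hle := AUC_le_one hrm D.margI D'.margO
        rw [hg2, Real.norm_eq_abs]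
        calc |(⨆ r : R, AUC r.1 D.margI D'.margO) - AUC (Alg n S) D.margI D'.margO|
            ≤ |(⨆ r : R, AUC r.1 D.margI D'.margO)| + |AUC (Alg n S) D.margI D'.margO| :=
              abs_sub _ _
          _ ≤ |(⨆ r : R, AUC r.1 D.margI D'.margO)| + 1 := by
              have : |AUC (Alg n S) D.margI D'.margO| ≤ 1 := abs_le.2 ⟨by linarith, hle⟩
              linarith
      have hpt : ∀ S, c ≤ g1 S + g2 S := by
        intro S
        have hrm : Measurable (Alg n S) := hR _ (hmem n hn S)
        have hk := hkey (Alg n S) hrm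
        simp only [hg1, hg2]
        rw [hsup, hsup']
        linarith
      have hci : c ≤ ∫ S, (g1 S + g2 S) ∂(sampleMeasure D n) := by
        have hcc : (∫ _ : (Fin n → ↥X × ℕ), c ∂(sampleMeasure D n)) = c := by
          simp
        rw [← hcc]
        exact integral_mono (integrable_const c) (hint1.add hint2) hpt
      rw [integral_add hint1 hint2] at hci
      linarith
    have hc0 : c ≤ 0 := by
      have h2ε : Tendsto (fun n => 2 * ε n) atTop (nhds 0) := by
        simpa using htend.const_mul 2
      exact ge_of_tendsto h2ε (Filter.eventually_atTop.2 ⟨1, fun n hn => hkeyn n hn⟩)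
    linarith

end OODF

end
end

section
/- Let K = 1 (so Y = {1} and Y_all = {1,2}, where 1 denotes ID and 2 denotes OOD) and let X be finite. Suppose the hypothesis space H satisfies: for every x ∈ X there exists h_x ∈ H with h_x(x) = 2, and the constant function h^in ≡ 1 belongs to H. Then OOD detection is learnable under risk in the separate space 𝒟^s for H if and only if H_all ∖ {h^out} ⊆ H, where H_all is the set of all functions X → {1,2} and h^out is the constant function h^out ≡ 2. -/
open MeasureTheory Filter Set
open scoped ENNReal NNReal

noncomputable section

namespace OODF

variable {𝒳 : Type*} [MeasurableSpace 𝒳] {K : ℕ}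

set_option linter.unusedSectionVars false
set_option maxHeartbeats 1000000

open scoped Classical

/-- the learning algorithm: label a point ID iff it appears in the sample -/
def algo (Ω : Type*) [MeasurableSpace Ω] : Algorithm Ω ℕ :=
  fun n S x => if ∀ i : Fin n, (S i).1 ≠ x then 2 else 1

section Aux
variable {Ω : Type*} [MeasurableSpace Ω] [Fintype Ω] [MeasurableSingletonClass Ω]

lemma measSet (s : Set Ω) : MeasurableSet s := s.to_countable.measurableSet

lemma measSetP (s : Set (Ω × ℕ)) : MeasurableSet s := s.to_countable.measurableSet

lemma aeI (D : Domain Ω 1) : ∀ᵐ p ∂D.DI, p.2 = 1 := by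
  rw [ae_iff]
  have : {p : Ω × ℕ | ¬p.2 = 1} = {p : Ω × ℕ | p.2 ∉ Set.Icc 1 1} := by
    ext p; simp
  rw [this]; exact D.suppI

lemma aeO (D : Domain Ω 1) : ∀ᵐ p ∂D.DO, p.2 = 2 := by
  rw [ae_iff]
  exact D.suppO

lemma integrable_DI (D : Domain Ω 1) (g : Ω × ℕ → ℝ) : Integrable g D.DI := by
  haveI := D.probI
  haveI : IsProbabilityMeasure D.margI := Measure.isProbabilityMeasure_map measurable_fst.aemeasurable
  have h1 : Integrable (fun x : Ω => g (x, 1)) D.margI := .of_finite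
  have h2 : Integrable ((fun x : Ω => g (x, 1)) ∘ Prod.fst) D.DI := by
    rw [← integrable_map_measure ((measurable_of_countable _).aestronglyMeasurable)
      measurable_fst.aemeasurable]
    exact h1
  exact h2.congr <| by filter_upwards [aeI D] with p hp; simp [Function.comp, ← hp]

lemma integrable_DO (D : Domain Ω 1) (g : Ω × ℕ → ℝ) : Integrable g D.DO := by
  haveI := D.probO
  haveI : IsProbabilityMeasure D.margO := Measure.isProbabilityMeasure_map measurable_fst.aemeasurable
  have h1 : Integrable (fun x : Ω => g (x, 2)) D.margO := .of_finite
  have h2 : Integrable ((fun x : Ω => g (x, 2)) ∘ Prod.fst) D.DO := by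
    rw [← integrable_map_measure ((measurable_of_countable _).aestronglyMeasurable)
      measurable_fst.aemeasurable]
    exact h1
  exact h2.congr <| by filter_upwards [aeO D] with p hp; simp [Function.comp, ← hp]

lemma intDI (D : Domain Ω 1) (g : Ω × ℕ → ℝ) :
    ∫ p, g p ∂D.DI = ∑ x, (D.margI {x}).toReal * g (x, 1) := by
  haveI := D.probI
  haveI : IsProbabilityMeasure D.margI := Measure.isProbabilityMeasure_map measurable_fst.aemeasurable
  have e1 : ∫ p, g p ∂D.DI = ∫ p, g (p.1, 1) ∂D.DI := by
    refine integral_congr_ae ?_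
    filter_upwards [aeI D] with p hp
    rw [← hp]
  have e2 : ∫ x, g (x, 1) ∂D.margI = ∫ p : Ω × ℕ, g (p.1, 1) ∂D.DI :=
    integral_map measurable_fst.aemeasurable
      ((measurable_of_countable _).aestronglyMeasurable)
  rw [e1, ← e2, integral_fintype .of_finite]
  simp [smul_eq_mul, measureReal_def]

lemma intDO (D : Domain Ω 1) (g : Ω × ℕ → ℝ) :
    ∫ p, g p ∂D.DO = ∑ x, (D.margO {x}).toReal * g (x, 2) := by
  haveI := D.probO
  haveI : IsProbabilityMeasure D.margO := Measure.isProbabilityMeasure_map measurable_fst.aemeasurable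
  have e1 : ∫ p, g p ∂D.DO = ∫ p, g (p.1, 2) ∂D.DO := by
    refine integral_congr_ae ?_
    filter_upwards [aeO D] with p hp
    rw [← hp]
  have e2 : ∫ x, g (x, 2) ∂D.margO = ∫ p : Ω × ℕ, g (p.1, 2) ∂D.DO :=
    integral_map measurable_fst.aemeasurable
      ((measurable_of_countable _).aestronglyMeasurable)
  rw [e1, ← e2, integral_fintype .of_finite]
  simp [smul_eq_mul, measureReal_def]

lemma risk_eq (ℓ : ℕ → ℕ → ℝ) (D : Domain Ω 1) (h : Ω → ℕ) :
    risk ℓ D h = (1 - D.prior) * ∑ x, (D.margI {x}).toReal * ℓ (h x) 1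
      + D.prior * ∑ x, (D.margO {x}).toReal * ℓ (h x) 2 := by
  have hp0 : (0:ℝ) ≤ D.prior := D.prior_mem.1
  have hp1 : (0:ℝ) ≤ 1 - D.prior := by have := D.prior_mem.2; linarith
  rw [risk, Domain.joint,
    integral_add_measure
      (((integrable_DI D _)).smul_measure ENNReal.ofReal_ne_top)
      (((integrable_DO D _)).smul_measure ENNReal.ofReal_ne_top),
    integral_smul_measure, integral_smul_measure,
    ENNReal.toReal_ofReal hp1, ENNReal.toReal_ofReal hp0,
    intDI D (fun p => ℓ (h p.1) p.2), intDO D (fun p => ℓ (h p.1) p.2)]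
  simp [smul_eq_mul]

lemma sum_margI (D : Domain Ω 1) : ∑ x, (D.margI {x}).toReal = 1 := by
  haveI := D.probI
  have := intDI D (fun _ => (1:ℝ))
  simpa using this.symm

lemma sum_margO (D : Domain Ω 1) : ∑ x, (D.margO {x}).toReal = 1 := by
  haveI := D.probO
  have := intDO D (fun _ => (1:ℝ))
  simpa using this.symm

lemma risk_nonneg {ℓ : ℕ → ℕ → ℝ} (hl : ∀ y₁ y₂, 0 ≤ ℓ y₁ y₂) (D : Domain Ω 1) (h : Ω → ℕ) :
    0 ≤ risk ℓ D h :=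
  integral_nonneg fun p => hl _ _

lemma risk_le_B {ℓ : ℕ → ℕ → ℝ} {B : ℝ}
    (hB : ∀ y₁ ∈ Set.Icc 1 2, ∀ y₂ ∈ Set.Icc 1 2, ℓ y₁ y₂ ≤ B)
    (D : Domain Ω 1) {h : Ω → ℕ} (hb : ∀ x, h x = 1 ∨ h x = 2) :
    risk ℓ D h ≤ B := by
  have h1 : (1:ℕ) ∈ Set.Icc 1 2 := by simp
  have h2 : (2:ℕ) ∈ Set.Icc 1 2 := by simp
  have hmem : ∀ x, h x ∈ Set.Icc 1 2 := fun x => by rcases hb x with h' | h' <;> simp [h']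
  have hs1 : ∑ x, (D.margI {x}).toReal * ℓ (h x) 1 ≤ B := by
    calc ∑ x, (D.margI {x}).toReal * ℓ (h x) 1 ≤ ∑ x, (D.margI {x}).toReal * B :=
          Finset.sum_le_sum fun x _ =>
            mul_le_mul_of_nonneg_left (hB _ (hmem x) _ h1) ENNReal.toReal_nonneg
      _ = B := by rw [← Finset.sum_mul, sum_margI, one_mul]
  have hs2 : ∑ x, (D.margO {x}).toReal * ℓ (h x) 2 ≤ B := by
    calc ∑ x, (D.margO {x}).toReal * ℓ (h x) 2 ≤ ∑ x, (D.margO {x}).toReal * B :=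
          Finset.sum_le_sum fun x _ =>
            mul_le_mul_of_nonneg_left (hB _ (hmem x) _ h2) ENNReal.toReal_nonneg
      _ = B := by rw [← Finset.sum_mul, sum_margO, one_mul]
  have hp0 : (0:ℝ) ≤ D.prior := D.prior_mem.1
  have hp1 : (0:ℝ) ≤ 1 - D.prior := by have := D.prior_mem.2; linarith
  rw [risk_eq]
  nlinarith

lemma mSupport_eq [TopologicalSpace Ω] [DiscreteTopology Ω] (μ : Measure Ω) :
    mSupport μ = {x | μ {x} ≠ 0} := by
  ext x
  constructor
  · intro hx
    have := hx {x} ((isOpen_discrete _).mem_nhds rfl)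
    simpa [pos_iff_ne_zero] using this
  · intro hx U hU
    refine lt_of_lt_of_le (pos_iff_ne_zero.mpr hx) (measure_mono ?_)
    simpa using mem_of_mem_nhds hU

lemma pn_bound {p : ℝ} (hp0 : 0 ≤ p) (hp1 : p ≤ 1) (n : ℕ) :
    p * (1 - p) ^ n ≤ 1 / (n + 1) := by
  have key : (n + 1 : ℝ) * (p * (1 - p) ^ n) ≤ 1 := by
    have h1 : ∀ k ∈ Finset.range (n + 1), p * (1 - p) ^ n ≤ p * (1 - p) ^ k := by
      intro k hk
      exact mul_le_mul_of_nonneg_left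
        (pow_le_pow_of_le_one (by linarith) (by linarith) (Nat.lt_succ_iff.mp (Finset.mem_range.mp hk))) hp0
    have h2 : (n + 1 : ℝ) * (p * (1 - p) ^ n) ≤ ∑ k ∈ Finset.range (n + 1), p * (1 - p) ^ k := by
      calc (n + 1 : ℝ) * (p * (1 - p) ^ n)
          = ∑ _k ∈ Finset.range (n + 1), p * (1 - p) ^ n := by
            rw [Finset.sum_const, Finset.card_range]; push_cast; ring
        _ ≤ _ := Finset.sum_le_sum h1
    have h3 : ∑ k ∈ Finset.range (n + 1), p * (1 - p) ^ k = 1 - (1 - p) ^ (n + 1) := by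
      have := geom_sum_mul (1 - p) (n + 1)
      have e : ((1:ℝ) - p) - 1 = -p := by ring
      rw [e] at this
      have hs : ∑ k ∈ Finset.range (n + 1), p * (1 - p) ^ k
          = p * ∑ k ∈ Finset.range (n + 1), (1 - p) ^ k := by rw [Finset.mul_sum]
      rw [hs]
      nlinarith [this]
    have h4 : (0:ℝ) ≤ (1 - p) ^ (n + 1) := pow_nonneg (by linarith) _
    linarith
  have hn : (0:ℝ) < n + 1 := by positivity
  rw [le_div_iff₀ hn]
  linarith [key]

end Aux

section Aux2
variable {Ω : Type*} [MeasurableSpace Ω] [Fintype Ω] [MeasurableSingletonClass Ω]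

lemma sampleMeasure_eq (D : Domain Ω 1) (n : ℕ) :
    sampleMeasure D n = Measure.pi fun _ : Fin n => D.DI := rfl

lemma sampleMeasure_prob (D : Domain Ω 1) (n : ℕ) :
    IsProbabilityMeasure (sampleMeasure D n) := by
  haveI := D.probI
  rw [sampleMeasure_eq]
  infer_instance

lemma pi_event (D : Domain Ω 1) (n : ℕ) (s : Set (Ω × ℕ)) :
    sampleMeasure D n (Set.pi Set.univ fun _ : Fin n => s) = (D.DI s) ^ n := by
  haveI := D.probI
  rw [sampleMeasure_eq, Measure.pi_pi]
  simp

lemma meas_risk_algo (ℓ : ℕ → ℕ → ℝ) (D : Domain Ω 1) (n : ℕ) :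
    Measurable fun S : Fin n → Ω × ℕ => risk ℓ D (algo Ω n S) := by
  have hΦ : Measurable fun (S : Fin n → Ω × ℕ) (x : Ω) => decide (∀ i, (S i).1 ≠ x) := by
    refine measurable_pi_lambda _ fun x => ?_
    have hset : MeasurableSet {S : Fin n → Ω × ℕ | ∀ i, (S i).1 ≠ x} := by
      have he : {S : Fin n → Ω × ℕ | ∀ i, (S i).1 ≠ x}
          = ⋂ i, (fun S : Fin n → Ω × ℕ => S i) ⁻¹' {p : Ω × ℕ | p.1 ≠ x} := by
        ext S; simp
      rw [he]
      exact MeasurableSet.iInter fun i => (measurable_pi_apply i) (measSetP _)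
    refine measurable_to_countable' fun b => ?_
    cases b
    · convert hset.compl using 1; ext S; simp
    · convert hset using 1; ext S; simp
  have hF : Measurable fun b : Ω → Bool => risk ℓ D (fun x => if b x then 2 else 1) :=
    measurable_of_countable _
  have he : (fun S : Fin n → Ω × ℕ => risk ℓ D (algo Ω n S))
      = (fun b : Ω → Bool => risk ℓ D (fun x => if b x then 2 else 1)) ∘
        (fun (S : Fin n → Ω × ℕ) (x : Ω) => decide (∀ i, (S i).1 ≠ x)) := by
    funext S
    simp only [Function.comp]
    congr 1
    funext x
    simp [algo]
  rw [he]
  exact hF.comp hΦ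

end Aux2


section Directions
variable {Ω : Type*} [MeasurableSpace Ω] [Fintype Ω] [MeasurableSingletonClass Ω]
  [TopologicalSpace Ω] [DiscreteTopology Ω]

lemma backward (ℓ : ℕ → ℕ → ℝ)
    (hl_nonneg : ∀ y₁ y₂, 0 ≤ ℓ y₁ y₂)
    (hl_zero : ∀ y₁ ∈ Set.Icc 1 2, ∀ y₂ ∈ Set.Icc 1 2, (ℓ y₁ y₂ = 0 ↔ y₁ = y₂))
    (hl_bdd : ∃ B, ∀ y₁ ∈ Set.Icc 1 2, ∀ y₂ ∈ Set.Icc 1 2, ℓ y₁ y₂ ≤ B)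
    (H : Set (Ω → ℕ)) (hin : (fun _ : Ω => 1) ∈ H)
    (hsub : {h : Ω → ℕ | ∀ x, h x = 1 ∨ h x = 2} \ {fun _ => 2} ⊆ H) :
    LearnableRisk ℓ (separateSpace Ω 1) H := by
  have h1m : (1:ℕ) ∈ Set.Icc 1 2 := by simp
  have h2m : (2:ℕ) ∈ Set.Icc 1 2 := by simp
  obtain ⟨B, hB⟩ := hl_bdd
  have hB0 : 0 ≤ B := by
    have := hB 1 h1m 1 h1m
    have h0 := (hl_zero 1 h1m 1 h1m).mpr rfl
    linarith
  set C : ℝ := (Fintype.card Ω : ℝ) * B with hC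
  have hC0 : 0 ≤ C := by positivity
  refine ⟨fun n => C / (n + 1), ?_, ?_, ?_⟩
  · intro a b hab
    exact div_le_div_of_nonneg_left hC0 (by positivity) (by push_cast; exact_mod_cast by linarith)
  · have := (tendsto_const_div_atTop_nhds_zero_nat C).comp (tendsto_add_atTop_nat 1)
    convert this using 2 with n
    simp [Function.comp]
  refine ⟨algo Ω, ?_, ?_, ?_⟩
  · -- membership
    intro n hn S
    refine hsub ⟨fun x => ?_, fun hc => ?_⟩
    · by_cases hcond : ∀ i : Fin n, (S i).1 ≠ x
      · right; simp [algo, hcond]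
      · left; simp [algo, hcond]
    · simp only [Set.mem_singleton_iff] at hc
      have := congrFun hc (S ⟨0, hn⟩).1
      simp only [algo] at this
      rw [if_neg (fun hall => hall ⟨0, hn⟩ rfl)] at this
      exact absurd this (by norm_num)
  · intro D _ n _
    exact meas_risk_algo ℓ D n
  · -- the risk bound
    intro D hD n hn
    haveI := D.probI
    haveI : IsProbabilityMeasure D.margI := Measure.isProbabilityMeasure_map measurable_fst.aemeasurable
    haveI := sampleMeasure_prob D n
    have hsep : ∀ x : Ω, D.margO {x} ≠ 0 → D.margI {x} = 0 := by
      intro x hO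
      by_contra hI
      have : x ∈ mSupport D.margO ∩ mSupport D.margI := by
        rw [mSupport_eq, mSupport_eq]; exact ⟨hO, hI⟩
      rw [show mSupport D.margO ∩ mSupport D.margI = ∅ from hD] at this
      exact this
    -- the infimum over H is 0
    haveI hne : Nonempty ↥H := ⟨⟨_, hin⟩⟩
    have hbdd : BddBelow (Set.range fun h : ↥H => risk ℓ D h.1) :=
      ⟨0, by rintro r ⟨h, rfl⟩; exact risk_nonneg hl_nonneg D h.1⟩
    set hstar : Ω → ℕ := fun x => if D.margO {x} = 0 then 1 else 2 with hhstar
    have hx0 : ∃ x0 : Ω, D.margI {x0} ≠ 0 := by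
      by_contra hall
      push_neg at hall
      have := sum_margI D
      simp only [hall] at this
      simp at this
    obtain ⟨x0, hx0⟩ := hx0
    have hx0O : D.margO {x0} = 0 := by
      by_contra hO
      exact hx0 (hsep x0 hO)
    have hstar_mem : hstar ∈ H := by
      refine hsub ⟨fun x => ?_, fun hc => ?_⟩
      · by_cases h' : D.margO {x} = 0
        · left; simp [hhstar, h']
        · right; simp [hhstar, h']
      · simp only [Set.mem_singleton_iff] at hc
        have := congrFun hc x0
        rw [hhstar] at this
        simp only [if_pos hx0O] at this
        exact absurd this (by norm_num)
    have hrs : risk ℓ D hstar = 0 := by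
      rw [risk_eq]
      have e1 : ∑ x, (D.margI {x}).toReal * ℓ (hstar x) 1 = 0 := by
        refine Finset.sum_eq_zero fun x _ => ?_
        by_cases h' : D.margO {x} = 0
        · have : hstar x = 1 := by simp [hhstar, h']
          rw [this, (hl_zero 1 h1m 1 h1m).mpr rfl, mul_zero]
        · rw [hsep x h']
          simp
      have e2 : ∑ x, (D.margO {x}).toReal * ℓ (hstar x) 2 = 0 := by
        refine Finset.sum_eq_zero fun x _ => ?_
        by_cases h' : D.margO {x} = 0
        · rw [h']; simp
        · have : hstar x = 2 := by simp [hhstar, h']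
          rw [this, (hl_zero 2 h2m 2 h2m).mpr rfl, mul_zero]
      rw [e1, e2, mul_zero, mul_zero, add_zero]
    have hinf : (⨅ h : ↥H, risk ℓ D h.1) = 0 :=
      le_antisymm ((ciInf_le hbdd ⟨hstar, hstar_mem⟩).trans hrs.le)
        (le_ciInf fun h => risk_nonneg hl_nonneg D h.1)
    simp only [hinf, sub_zero]
    -- main bound
    set P := sampleMeasure D n with hP
    set g : (Fin n → Ω × ℕ) → ℝ := fun S => ∑ x, (D.margI {x}).toReal *
      Set.indicator (Set.pi Set.univ fun _ : Fin n => {p : Ω × ℕ | p.1 ≠ x}) (fun _ => B) S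
      with hg
    have hmsEx : ∀ x : Ω, MeasurableSet (Set.pi Set.univ fun _ : Fin n => {p : Ω × ℕ | p.1 ≠ x}) :=
      fun x => MeasurableSet.pi Set.countable_univ fun i _ => measSetP _
    have hfInt : Integrable (fun S => risk ℓ D (algo Ω n S)) P := by
      refine Integrable.mono' (integrable_const B)
        (meas_risk_algo ℓ D n).aestronglyMeasurable (ae_of_all _ fun S => ?_)
      rw [Real.norm_eq_abs, abs_of_nonneg (risk_nonneg hl_nonneg D _)]
      refine risk_le_B hB D fun x => ?_
      by_cases hcond : ∀ i : Fin n, (S i).1 ≠ x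
      · right; simp [algo, hcond]
      · left; simp [algo, hcond]
    have hgInt : Integrable g P := by
      refine integrable_finset_sum _ fun x _ => ?_
      exact (((integrable_const B).indicator (hmsEx x))).const_mul _
    have hae : ∀ᵐ S ∂P, risk ℓ D (algo Ω n S) ≤ g S := by
      set N : Set Ω := {x | D.margI {x} = 0} with hN
      have hNnull : D.margI N = 0 := by
        rw [← Set.biUnion_of_singleton N]
        exact (measure_biUnion_null_iff N.to_countable).mpr fun x hx => hx
      have hNpre : D.DI (Prod.fst ⁻¹' N) = 0 := by
        rw [Domain.margI, Measure.map_apply measurable_fst (measSet N)] at hNnull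
        exact hNnull
      have haeN : ∀ᵐ S ∂P, ∀ i : Fin n, (S i).1 ∉ N := by
        rw [ae_iff]
        have hsub2 : {S : Fin n → Ω × ℕ | ¬ ∀ i : Fin n, (S i).1 ∉ N}
            ⊆ ⋃ i : Fin n, (fun S : Fin n → Ω × ℕ => S i) ⁻¹' (Prod.fst ⁻¹' N) := by
          intro S hS
          simp only [Set.mem_setOf_eq] at hS
          push_neg at hS
          obtain ⟨i, hi⟩ := hS
          exact Set.mem_iUnion.mpr ⟨i, hi⟩
        refine measure_mono_null hsub2 ?_
        rw [measure_iUnion_null_iff]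
        intro i
        rw [hP, sampleMeasure_eq]
        exact Measure.pi_eval_preimage_null (μ := fun _ : Fin n => D.DI) (i := i) hNpre
      filter_upwards [haeN] with S hS
      rw [risk_eq]
      have hS2 : ∑ x, (D.margO {x}).toReal * ℓ (algo Ω n S x) 2 = 0 := by
        refine Finset.sum_eq_zero fun x _ => ?_
        by_cases hmO : D.margO {x} = 0
        · rw [hmO]; simp
        · have hmI : D.margI {x} = 0 := hsep x hmO
          have hxx : ∀ i : Fin n, (S i).1 ≠ x := by
            intro i heq
            exact hS i (by rw [hN, Set.mem_setOf_eq, heq]; exact hmI)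
          have : algo Ω n S x = 2 := if_pos hxx
          rw [this, (hl_zero 2 h2m 2 h2m).mpr rfl, mul_zero]
      have hS1 : ∑ x, (D.margI {x}).toReal * ℓ (algo Ω n S x) 1 ≤ g S := by
        refine Finset.sum_le_sum fun x _ => ?_
        by_cases hxx : ∀ i : Fin n, (S i).1 ≠ x
        · have hmem : S ∈ Set.pi Set.univ fun _ : Fin n => {p : Ω × ℕ | p.1 ≠ x} :=
            Set.mem_pi.mpr fun i _ => hxx i
          rw [Set.indicator_of_mem hmem]
          have : algo Ω n S x = 2 := if_pos hxx
          rw [this]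
          exact mul_le_mul_of_nonneg_left (hB 2 h2m 1 h1m) ENNReal.toReal_nonneg
        · have : algo Ω n S x = 1 := if_neg hxx
          rw [this, (hl_zero 1 h1m 1 h1m).mpr rfl, mul_zero]
          exact mul_nonneg ENNReal.toReal_nonneg (Set.indicator_nonneg (fun _ _ => hB0) _)
      have hS1nn : 0 ≤ ∑ x, (D.margI {x}).toReal * ℓ (algo Ω n S x) 1 :=
        Finset.sum_nonneg fun x _ => mul_nonneg ENNReal.toReal_nonneg (hl_nonneg _ _)
      have hp := D.prior_mem
      rw [hS2, mul_zero, add_zero]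
      nlinarith [hp.1, hp.2, hS1, hS1nn]
    calc ∫ S, risk ℓ D (algo Ω n S) ∂P ≤ ∫ S, g S ∂P := integral_mono_ae hfInt hgInt hae
      _ ≤ C / (n + 1) := by
        rw [hg, integral_finset_sum _
          (fun x _ => (((integrable_const B).indicator (hmsEx x))).const_mul _)]
        have hterm : ∀ x : Ω, ∫ S, (D.margI {x}).toReal *
            Set.indicator (Set.pi Set.univ fun _ : Fin n => {p : Ω × ℕ | p.1 ≠ x})
              (fun _ => B) S ∂P ≤ B * (1 / (n + 1)) := by
          intro x
          rw [integral_const_mul, integral_indicator_const _ (hmsEx x), measureReal_def]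
          have hPEx : P (Set.pi Set.univ fun _ : Fin n => {p : Ω × ℕ | p.1 ≠ x})
              = (D.DI {p : Ω × ℕ | p.1 ≠ x}) ^ n := pi_event D n _
          have hq : (D.DI {p : Ω × ℕ | p.1 ≠ x}).toReal = 1 - (D.margI {x}).toReal := by
            have he : {p : Ω × ℕ | p.1 ≠ x} = (Prod.fst ⁻¹' {x})ᶜ := by ext p; simp
            rw [he, prob_compl_eq_one_sub (measSetP _),
              ENNReal.toReal_sub_of_le prob_le_one ENNReal.one_ne_top, ENNReal.toReal_one,
              Domain.margI, Measure.map_apply measurable_fst (measSet _)]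
          set p := (D.margI {x}).toReal with hpdef
          have hp0 : 0 ≤ p := ENNReal.toReal_nonneg
          have hp1 : p ≤ 1 := by
            have := prob_le_one (μ := D.margI) (s := {x})
            have := ENNReal.toReal_mono ENNReal.one_ne_top this
            simpa using this
          rw [hPEx, ENNReal.toReal_pow, hq]
          have := pn_bound hp0 hp1 n
          calc p • ((1 - p) ^ n * B) = (p * (1 - p) ^ n) * B := by rw [smul_eq_mul]; ring
            _ ≤ (1 / (n + 1)) * B := mul_le_mul_of_nonneg_right this hB0
            _ = B * (1 / (n + 1)) := by ring
        calc (∑ x : Ω, ∫ S, (D.margI {x}).toReal *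
              Set.indicator (Set.pi Set.univ fun _ : Fin n => {p : Ω × ℕ | p.1 ≠ x})
                (fun _ => B) S ∂P)
            ≤ ∑ _x : Ω, B * (1 / (n + 1)) := Finset.sum_le_sum fun x _ => hterm x
          _ = C / (n + 1) := by
            rw [Finset.sum_const, Finset.card_univ, nsmul_eq_mul, hC]
            ring


def unifMeasure (I : Finset Ω) : Measure (Ω × ℕ) :=
  (I.card : ℝ≥0∞)⁻¹ • ∑ x ∈ I, Measure.dirac ((x, 1) : Ω × ℕ)

lemma unifMeasure_prob {I : Finset Ω} (hI : I.Nonempty) :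
    IsProbabilityMeasure (unifMeasure I) := by
  constructor
  rw [unifMeasure, Measure.smul_apply, Measure.finset_sum_apply]
  simp only [measure_univ]
  rw [Finset.sum_const, nsmul_eq_mul, mul_one, smul_eq_mul]
  exact ENNReal.inv_mul_cancel (by exact_mod_cast Finset.card_ne_zero.mpr hI)
    (ENNReal.natCast_ne_top _)

def unifDomain (I : Finset Ω) (hI : I.Nonempty) (z : Ω) (α : ℝ)
    (hα : α ∈ Set.Ico (0:ℝ) 1) : Domain Ω 1 where
  DI := unifMeasure I
  DO := Measure.dirac (z, 2)
  prior := α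
  probI := unifMeasure_prob hI
  probO := inferInstance
  suppI := by
    rw [unifMeasure, Measure.smul_apply, Measure.finset_sum_apply]
    have : ∀ x ∈ I, Measure.dirac ((x, 1) : Ω × ℕ) {p : Ω × ℕ | p.2 ∉ Set.Icc 1 1} = 0 := by
      intro x _
      rw [Measure.dirac_apply' _ (measSetP _)]
      simp
    rw [Finset.sum_congr rfl this]
    simp
  suppO := by
    rw [Measure.dirac_apply' _ (measSetP _)]
    simp
  prior_mem := hα

lemma unifDomain_margI_null {I : Finset Ω} (hI : I.Nonempty) (z : Ω) (α : ℝ)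
    (hα : α ∈ Set.Ico (0:ℝ) 1) {x : Ω} (hx : x ∉ I) :
    (unifDomain I hI z α hα).margI {x} = 0 := by
  rw [Domain.margI, Measure.map_apply measurable_fst (measSet _)]
  show unifMeasure I (Prod.fst ⁻¹' {x}) = 0
  rw [unifMeasure, Measure.smul_apply, Measure.finset_sum_apply]
  have : ∀ x' ∈ I, Measure.dirac ((x', 1) : Ω × ℕ) (Prod.fst ⁻¹' {x}) = 0 := by
    intro x' hx'
    rw [Measure.dirac_apply' _ (measSetP _)]
    have : ((x', 1) : Ω × ℕ) ∉ Prod.fst ⁻¹' {x} := by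
      simp only [Set.mem_preimage, Set.mem_singleton_iff]
      rintro rfl
      exact hx hx'
    simp [this]
  rw [Finset.sum_congr rfl this]
  simp

lemma unifDomain_margO_null {I : Finset Ω} (hI : I.Nonempty) (z : Ω) (α : ℝ)
    (hα : α ∈ Set.Ico (0:ℝ) 1) {x : Ω} (hx : x ≠ z) :
    (unifDomain I hI z α hα).margO {x} = 0 := by
  rw [Domain.margO, Measure.map_apply measurable_fst (measSet _)]
  show Measure.dirac ((z, 2) : Ω × ℕ) (Prod.fst ⁻¹' {x}) = 0
  rw [Measure.dirac_apply' _ (measSetP _)]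
  have : ((z, 2) : Ω × ℕ) ∉ Prod.fst ⁻¹' {x} := by
    simp only [Set.mem_preimage, Set.mem_singleton_iff]
    exact fun h => hx h.symm
  simp [this]

lemma unifDomain_mem {I : Finset Ω} (hI : I.Nonempty) {z : Ω} (α : ℝ)
    (hα : α ∈ Set.Ico (0:ℝ) 1) (hz : z ∉ I) :
    unifDomain I hI z α hα ∈ separateSpace Ω 1 := by
  show mSupport _ ∩ mSupport _ = ∅
  rw [mSupport_eq, mSupport_eq, Set.eq_empty_iff_forall_notMem]
  rintro x ⟨hO, hI'⟩
  by_cases hxz : x = z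
  · subst hxz
    by_cases hxI : x ∈ I
    · exact hz hxI
    · exact hI' (unifDomain_margI_null hI x α hα hxI)
  · exact hO (unifDomain_margO_null hI z α hα hxz)

lemma integrable_dirac {α : Type*} [MeasurableSpace α] [MeasurableSingletonClass α]
    (g : α → ℝ) (a : α) : Integrable g (Measure.dirac a) := by
  refine (integrable_const (g a)).congr ?_
  rw [Filter.eventuallyEq_iff_exists_mem]
  exact ⟨{a}, by rw [ae_dirac_eq]; simp, fun x hx => by simp at hx; simp [hx]⟩

lemma int_unif (I : Finset Ω) (g : Ω × ℕ → ℝ) :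
    ∫ p, g p ∂(unifMeasure I) = (I.card : ℝ)⁻¹ * ∑ x ∈ I, g (x, 1) := by
  rw [unifMeasure, integral_smul_measure,
    integral_finset_sum_measure (fun x _ => integrable_dirac g (x, 1))]
  have : ∀ x ∈ I, ∫ p, g p ∂(Measure.dirac ((x, 1) : Ω × ℕ)) = g (x, 1) :=
    fun x _ => integral_dirac g (x, 1)
  rw [Finset.sum_congr rfl this, ENNReal.toReal_inv, ENNReal.toReal_natCast, smul_eq_mul]

lemma risk_unifDomain (ℓ : ℕ → ℕ → ℝ) {I : Finset Ω} (hI : I.Nonempty) (z : Ω) (α : ℝ)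
    (hα : α ∈ Set.Ico (0:ℝ) 1) (h : Ω → ℕ) :
    risk ℓ (unifDomain I hI z α hα) h
      = (1 - α) * ((I.card : ℝ)⁻¹ * ∑ x ∈ I, ℓ (h x) 1) + α * ℓ (h z) 2 := by
  have h1 : Integrable (fun p : Ω × ℕ => ℓ (h p.1) p.2) (unifDomain I hI z α hα).DI :=
    integrable_DI _ _
  have h2 : Integrable (fun p : Ω × ℕ => ℓ (h p.1) p.2) (unifDomain I hI z α hα).DO :=
    integrable_DO _ _
  rw [risk, Domain.joint,
    integral_add_measure (h1.smul_measure ENNReal.ofReal_ne_top)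
      (h2.smul_measure ENNReal.ofReal_ne_top),
    integral_smul_measure, integral_smul_measure,
    show (unifDomain I hI z α hα).prior = α from rfl,
    ENNReal.toReal_ofReal (by linarith [hα.2] : (0:ℝ) ≤ 1 - α),
    ENNReal.toReal_ofReal hα.1]
  show (1 - α) • (∫ p, ℓ (h p.1) p.2 ∂(unifMeasure I))
      + α • (∫ p, ℓ (h p.1) p.2 ∂(Measure.dirac ((z, 2) : Ω × ℕ))) = _
  rw [int_unif I (fun p => ℓ (h p.1) p.2), integral_dirac (fun p : Ω × ℕ => ℓ (h p.1) p.2) (z, 2),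
    smul_eq_mul, smul_eq_mul]

lemma integrable_risk (ℓ : ℕ → ℕ → ℝ) {B : ℝ}
    (hl_nonneg : ∀ y₁ y₂, 0 ≤ ℓ y₁ y₂)
    (hB : ∀ y₁ ∈ Set.Icc 1 2, ∀ y₂ ∈ Set.Icc 1 2, ℓ y₁ y₂ ≤ B)
    (D : Domain Ω 1) {n : ℕ} (A : Algorithm Ω ℕ)
    (hbin : ∀ S : Fin n → Ω × ℕ, ∀ x, A n S x = 1 ∨ A n S x = 2)
    (hmeas : Measurable fun S : Fin n → Ω × ℕ => risk ℓ D (A n S))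
    (P : Measure (Fin n → Ω × ℕ)) [IsFiniteMeasure P] :
    Integrable (fun S => risk ℓ D (A n S)) P := by
  refine Integrable.mono' (integrable_const B) hmeas.aestronglyMeasurable
    (ae_of_all _ fun S => ?_)
  rw [Real.norm_eq_abs, abs_of_nonneg (risk_nonneg hl_nonneg D _)]
  exact risk_le_B hB D (hbin S)

set_option maxHeartbeats 1000000 in
lemma forward (ℓ : ℕ → ℕ → ℝ)
    (hl_nonneg : ∀ y₁ y₂, 0 ≤ ℓ y₁ y₂)
    (hl_zero : ∀ y₁ ∈ Set.Icc 1 2, ∀ y₂ ∈ Set.Icc 1 2, (ℓ y₁ y₂ = 0 ↔ y₁ = y₂))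
    (hl_bdd : ∃ B, ∀ y₁ ∈ Set.Icc 1 2, ∀ y₂ ∈ Set.Icc 1 2, ℓ y₁ y₂ ≤ B)
    (H : Set (Ω → ℕ)) (hH : ∀ h ∈ H, ∀ x, h x = 1 ∨ h x = 2)
    (hsepH : ∀ x : Ω, ∃ h ∈ H, h x = 2)
    (hin : (fun _ : Ω => 1) ∈ H)
    (hlearn : LearnableRisk ℓ (separateSpace Ω 1) H) :
    {h : Ω → ℕ | ∀ x, h x = 1 ∨ h x = 2} \ {fun _ => 2} ⊆ H := by
  have h1m : (1:ℕ) ∈ Set.Icc 1 2 := by simp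
  have h2m : (2:ℕ) ∈ Set.Icc 1 2 := by simp
  obtain ⟨B, hB⟩ := hl_bdd
  have hB0 : 0 ≤ B := by
    have := hB 1 h1m 1 h1m
    have h0 := (hl_zero 1 h1m 1 h1m).mpr rfl
    linarith
  have hl11 : ℓ 1 1 = 0 := (hl_zero 1 h1m 1 h1m).mpr rfl
  have hl22 : ℓ 2 2 = 0 := (hl_zero 2 h2m 2 h2m).mpr rfl
  have hδ : 0 < ℓ 1 2 := by
    rcases lt_or_eq_of_le (hl_nonneg 1 2) with h' | h'
    · exact h'
    · exact absurd ((hl_zero 1 h1m 2 h2m).mp h'.symm) (by norm_num)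
  have hl21 : 0 < ℓ 2 1 := by
    rcases lt_or_eq_of_le (hl_nonneg 2 1) with h' | h'
    · exact h'
    · exact absurd ((hl_zero 2 h2m 1 h1m).mp h'.symm) (by norm_num)
  obtain ⟨δ, hδpos, hδ12⟩ : ∃ δ : ℝ, 0 < δ ∧ δ = ℓ 1 2 := ⟨_, hδ, rfl⟩
  intro h0 hmem0
  obtain ⟨hb0, hne2⟩ := hmem0
  simp only [Set.mem_setOf_eq] at hb0
  by_contra hnot
  have hz0 : ∃ z, h0 z = 2 := by
    by_contra hall
    push_neg at hall
    have : h0 = fun _ => 1 := funext fun x => (hb0 x).resolve_right (hall x)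
    rw [this] at hnot
    exact hnot hin
  obtain ⟨z0, hz0⟩ := hz0
  have hxI : ∃ x, h0 x = 1 := by
    by_contra hall
    push_neg at hall
    exact hne2 (Set.mem_singleton_iff.mpr
      (funext fun x => (hb0 x).resolve_left (hall x)))
  obtain ⟨I, hIdef⟩ : ∃ I : Finset Ω, I = Finset.univ.filter (fun x => h0 x = 1) := ⟨_, rfl⟩
  obtain ⟨Cs, hCdef⟩ : ∃ Cs : Finset Ω, Cs = Finset.univ.filter (fun x => h0 x = 2) := ⟨_, rfl⟩
  have hmemI : ∀ x, h0 x = 1 → x ∈ I := fun x hx => by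
    rw [hIdef]; exact Finset.mem_filter.mpr ⟨Finset.mem_univ x, hx⟩
  have hmemC : ∀ x, h0 x = 2 → x ∈ Cs := fun x hx => by
    rw [hCdef]; exact Finset.mem_filter.mpr ⟨Finset.mem_univ x, hx⟩
  have hI : I.Nonempty := by
    obtain ⟨x, hx⟩ := hxI
    exact ⟨x, hmemI x hx⟩
  have hz0C : z0 ∈ Cs := hmemC z0 hz0
  have hIcard : (0:ℝ) < I.card := by exact_mod_cast Finset.card_pos.mpr hI
  have hznotI : ∀ z ∈ Cs, z ∉ I := by
    intro z hz hzI
    rw [hCdef, Finset.mem_filter] at hz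
    rw [hIdef, Finset.mem_filter] at hzI
    rw [hzI.2] at hz
    exact absurd hz.2 (by norm_num)
  obtain ⟨M, hM0, hMkey⟩ : ∃ M : ℝ, 0 < M ∧ M * ((I.card : ℝ)⁻¹ * ℓ 2 1) = δ := by
    refine ⟨I.card * δ / ℓ 2 1, by positivity, ?_⟩
    field_simp
  have h0mem : (0:ℝ) ∈ Set.Ico (0:ℝ) 1 := ⟨le_refl _, by norm_num⟩
  obtain ⟨α, hαmem, hα2, hα3⟩ : ∃ α : ℝ, α ∈ Set.Ico (0:ℝ) 1 ∧ (1/2:ℝ) ≤ α ∧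
      (Cs.card : ℝ) * B * (1 - α) ≤ δ / 4 := by
    have hK : (0:ℝ) < Cs.card * B + 1 := by positivity
    refine ⟨max (1/2) (1 - δ / (4 * (Cs.card * B + 1))), ⟨?_, ?_⟩, le_max_left _ _, ?_⟩
    · have h' : (0:ℝ) ≤ 1/2 := by norm_num
      exact h'.trans (le_max_left _ _)
    · apply max_lt (by norm_num)
      have : 0 < δ / (4 * (Cs.card * B + 1)) := by positivity
      linarith
    · have h1 : 1 - max (1/2) (1 - δ / (4 * (Cs.card * B + 1)))
          ≤ δ / (4 * (Cs.card * B + 1)) := by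
        have := le_max_right (1/2 : ℝ) (1 - δ / (4 * (Cs.card * B + 1)))
        linarith
      have hcB : (0:ℝ) ≤ (Cs.card : ℝ) * B := by positivity
      have h2 := mul_le_mul_of_nonneg_left h1 hcB
      have h3 : (Cs.card : ℝ) * B * (δ / (4 * (Cs.card * B + 1))) ≤ δ / 4 := by
        rw [← mul_div_assoc, div_le_div_iff₀ (by positivity) (by norm_num)]
        nlinarith
      linarith
  have hα1 : α < 1 := hαmem.2
  have hα0 : (0:ℝ) ≤ α := hαmem.1
  obtain ⟨ε, hanti, hlim, A, hmemA, hmeasA, hboundA⟩ := hlearn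
  have hε0 : ∀ n, 0 ≤ ε n := fun n =>
    le_of_tendsto hlim ((eventually_ge_atTop n).mono fun m hm => hanti hm)
  have hev : ∀ᶠ n in atTop, ε n < δ / (8 * (M + Cs.card + 1)) :=
    hlim.eventually_lt_const (by positivity)
  obtain ⟨n, hεn, hn1⟩ := (hev.and (eventually_ge_atTop 1)).exists
  -- opaque versions of the domains
  obtain ⟨D0, hD0mem, hD0risk, hD0samp⟩ :
      ∃ D0 : Domain Ω 1, D0 ∈ separateSpace Ω 1 ∧
        (∀ h : Ω → ℕ, risk ℓ D0 h = (I.card : ℝ)⁻¹ * ∑ x ∈ I, ℓ (h x) 1) ∧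
        sampleMeasure D0 n = Measure.pi (fun _ : Fin n => unifMeasure I) := by
    refine ⟨unifDomain I hI z0 0 h0mem, unifDomain_mem hI 0 h0mem (hznotI z0 hz0C),
      fun h => ?_, rfl⟩
    rw [risk_unifDomain]
    ring
  obtain ⟨Dz, hDzmem, hDzrisk, hDzsamp⟩ :
      ∃ Dz : (z : Ω) → z ∈ Cs → Domain Ω 1, (∀ z hz, Dz z hz ∈ separateSpace Ω 1) ∧
        (∀ z hz (h : Ω → ℕ), risk ℓ (Dz z hz) h
          = (1 - α) * ((I.card : ℝ)⁻¹ * ∑ x ∈ I, ℓ (h x) 1) + α * ℓ (h z) 2) ∧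
        (∀ z hz, sampleMeasure (Dz z hz) n = Measure.pi (fun _ : Fin n => unifMeasure I)) := by
    exact ⟨fun z _ => unifDomain I hI z α hαmem,
      fun z hz => unifDomain_mem hI α hαmem (hznotI z hz),
      fun z hz h => risk_unifDomain ℓ hI z α hαmem h,
      fun z hz => rfl⟩
  set P : Measure (Fin n → Ω × ℕ) := Measure.pi (fun _ : Fin n => unifMeasure I) with hPdef
  haveI := unifMeasure_prob hI
  haveI : IsProbabilityMeasure P := by rw [hPdef]; infer_instance
  haveI hne : Nonempty ↥H := ⟨⟨_, hin⟩⟩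
  have hbinary : ∀ S : Fin n → Ω × ℕ, ∀ x, A n S x = 1 ∨ A n S x = 2 :=
    fun S => hH _ (hmemA n hn1 S)
  have hfzInt : ∀ z (hz : z ∈ Cs), Integrable (fun S => risk ℓ (Dz z hz) (A n S)) P :=
    fun z hz => integrable_risk ℓ hl_nonneg hB _ A hbinary
      (hmeasA _ (hDzmem z hz) n hn1) P
  have hf0Int : Integrable (fun S => risk ℓ D0 (A n S)) P :=
    integrable_risk ℓ hl_nonneg hB _ A hbinary (hmeasA _ hD0mem n hn1) P
  have hbddD : ∀ D : Domain Ω 1, BddBelow (Set.range fun h : ↥H => risk ℓ D h.1) :=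
    fun D => ⟨0, by rintro r ⟨h, rfl⟩; exact risk_nonneg hl_nonneg D h.1⟩
  have havg_le : ∀ h : Ω → ℕ, (∀ x, h x = 1 ∨ h x = 2) →
      (I.card : ℝ)⁻¹ * ∑ x ∈ I, ℓ (h x) 1 ≤ B := by
    intro h hb
    have hsum : ∑ x ∈ I, ℓ (h x) 1 ≤ I.card * B := by
      calc ∑ x ∈ I, ℓ (h x) 1 ≤ ∑ _x ∈ I, B := Finset.sum_le_sum fun x _ => by
            rcases hb x with h' | h' <;> rw [h'] <;> [exact hB 1 h1m 1 h1m; exact hB 2 h2m 1 h1m]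
        _ = I.card * B := by rw [Finset.sum_const, nsmul_eq_mul]
    calc (I.card : ℝ)⁻¹ * ∑ x ∈ I, ℓ (h x) 1 ≤ (I.card : ℝ)⁻¹ * (I.card * B) :=
          mul_le_mul_of_nonneg_left hsum (inv_nonneg.mpr (Nat.cast_nonneg _))
      _ = B := by rw [← mul_assoc, inv_mul_cancel₀ (ne_of_gt hIcard), one_mul]
  have havg_nn : ∀ h : Ω → ℕ, (0:ℝ) ≤ (I.card : ℝ)⁻¹ * ∑ x ∈ I, ℓ (h x) 1 :=
    fun h => mul_nonneg (inv_nonneg.mpr (Nat.cast_nonneg _))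
      (Finset.sum_nonneg fun x _ => hl_nonneg _ _)
  have hmz : ∀ z (hz : z ∈ Cs), (⨅ h : ↥H, risk ℓ (Dz z hz) h.1) ≤ (1 - α) * B := by
    intro z hz
    obtain ⟨hz2, hz2H, hz2eq⟩ := hsepH z
    calc (⨅ h : ↥H, risk ℓ (Dz z hz) h.1) ≤ risk ℓ (Dz z hz) hz2 :=
          ciInf_le (hbddD _) ⟨hz2, hz2H⟩
      _ = (1 - α) * ((I.card : ℝ)⁻¹ * ∑ x ∈ I, ℓ (hz2 x) 1) + α * ℓ (hz2 z) 2 :=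
          hDzrisk z hz hz2
      _ ≤ (1 - α) * B := by
          rw [hz2eq, hl22, mul_zero, add_zero]
          exact mul_le_mul_of_nonneg_left (havg_le hz2 (hH _ hz2H)) (by linarith)
  have hm0 : (⨅ h : ↥H, risk ℓ D0 h.1) ≤ 0 := by
    calc (⨅ h : ↥H, risk ℓ D0 h.1) ≤ risk ℓ D0 (fun _ => 1) :=
          ciInf_le (hbddD _) ⟨(fun _ => 1), hin⟩
      _ = 0 := by
          rw [hD0risk]
          have he : ∑ x ∈ I, ℓ ((fun _ : Ω => (1:ℕ)) x) 1 = 0 :=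
            Finset.sum_eq_zero fun x _ => hl11
          rw [he, mul_zero]
  have hub : ∀ (D : Domain Ω 1), D ∈ separateSpace Ω 1 → sampleMeasure D n = P →
      Integrable (fun S => risk ℓ D (A n S)) P →
      ∫ S, risk ℓ D (A n S) ∂P ≤ (⨅ h : ↥H, risk ℓ D h.1) + ε n := by
    intro D hDmem hPeq hDint
    have hb' := hboundA D hDmem n hn1
    rw [hPeq, integral_sub hDint (integrable_const _), integral_const, probReal_univ,
      one_smul] at hb'
    linarith
  have hfz_bound : ∀ z (hz : z ∈ Cs),
      ∫ S, risk ℓ (Dz z hz) (A n S) ∂P ≤ (1 - α) * B + ε n := by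
    intro z hz
    have := hub (Dz z hz) (hDzmem z hz) (hDzsamp z hz) (hfzInt z hz)
    linarith [hmz z hz]
  have hf0_bound : ∫ S, risk ℓ D0 (A n S) ∂P ≤ ε n := by
    have := hub D0 hD0mem hD0samp hf0Int
    linarith [hm0]
  -- pointwise lower bound
  have hpt : ∀ S : Fin n → Ω × ℕ,
      δ / 2 ≤ M * risk ℓ D0 (A n S) + ∑ z ∈ Cs.attach, risk ℓ (Dz z.1 z.2) (A n S) := by
    intro S
    have hSne : A n S ≠ h0 := fun e => hnot (e ▸ hmemA n hn1 S)
    obtain ⟨x, hx⟩ := Function.ne_iff.mp hSne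
    have hsumnn : (0:ℝ) ≤ ∑ z ∈ Cs.attach, risk ℓ (Dz z.1 z.2) (A n S) :=
      Finset.sum_nonneg fun z _ => risk_nonneg hl_nonneg _ _
    have hf0nn : (0:ℝ) ≤ risk ℓ D0 (A n S) := risk_nonneg hl_nonneg _ _
    rcases hb0 x with hx1 | hx2
    · -- h0 x = 1, so A n S x = 2, x ∈ I
      have hAx : A n S x = 2 := by
        rcases hbinary S x with h' | h'
        · exact absurd (h'.trans hx1.symm) hx
        · exact h'
      have hxI2 : x ∈ I := hmemI x hx1
      have hrisk0 : (I.card : ℝ)⁻¹ * ℓ 2 1 ≤ risk ℓ D0 (A n S) := by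
        rw [hD0risk]
        have h' : ℓ (A n S x) 1 ≤ ∑ x' ∈ I, ℓ (A n S x') 1 :=
          Finset.single_le_sum (f := fun x' => ℓ (A n S x') 1)
            (fun x' _ => hl_nonneg _ _) hxI2
        rw [hAx] at h'
        exact mul_le_mul_of_nonneg_left h' (inv_nonneg.mpr (Nat.cast_nonneg _))
      have hMr : δ ≤ M * risk ℓ D0 (A n S) := by
        have h1 : M * ((I.card : ℝ)⁻¹ * ℓ 2 1) ≤ M * risk ℓ D0 (A n S) :=
          mul_le_mul_of_nonneg_left hrisk0 hM0.le
        linarith [hMkey]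
      linarith
    · -- h0 x = 2, so A n S x = 1, x ∈ Cs
      have hAx : A n S x = 1 := by
        rcases hbinary S x with h' | h'
        · exact h'
        · exact absurd (h'.trans hx2.symm) hx
      have hxC : x ∈ Cs := hmemC x hx2
      have hriskx : α * δ ≤ risk ℓ (Dz x hxC) (A n S) := by
        have hr := hDzrisk x hxC (A n S)
        rw [hAx, ← hδ12] at hr
        have havgnn := havg_nn (A n S)
        nlinarith [hα1]
      have hsumx : risk ℓ (Dz x hxC) (A n S)
          ≤ ∑ z ∈ Cs.attach, risk ℓ (Dz z.1 z.2) (A n S) :=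
        Finset.single_le_sum (f := fun z : {z // z ∈ Cs} => risk ℓ (Dz z.1 z.2) (A n S))
          (fun z _ => risk_nonneg hl_nonneg _ _) (Finset.mem_attach _ ⟨x, hxC⟩)
      have hhalf : δ / 2 ≤ α * δ := by nlinarith
      nlinarith [mul_nonneg hM0.le hf0nn]
  -- integrate
  have hTint : Integrable (fun S => M * risk ℓ D0 (A n S)
      + ∑ z ∈ Cs.attach, risk ℓ (Dz z.1 z.2) (A n S)) P :=
    (hf0Int.const_mul M).add (integrable_finset_sum _ fun z _ => hfzInt z.1 z.2)
  have hint_lb : δ / 2 ≤ ∫ S, (M * risk ℓ D0 (A n S)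
      + ∑ z ∈ Cs.attach, risk ℓ (Dz z.1 z.2) (A n S)) ∂P := by
    have h' := integral_mono (integrable_const (δ / 2)) hTint (fun S => hpt S)
    rw [integral_const, probReal_univ, one_smul] at h'
    exact h'
  have hint_ub : ∫ S, (M * risk ℓ D0 (A n S)
      + ∑ z ∈ Cs.attach, risk ℓ (Dz z.1 z.2) (A n S)) ∂P
      ≤ M * ε n + Cs.card * ((1 - α) * B + ε n) := by
    rw [integral_add (hf0Int.const_mul M) (integrable_finset_sum _ fun z _ => hfzInt z.1 z.2),
      integral_const_mul, integral_finset_sum _ fun z _ => hfzInt z.1 z.2]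
    have h1 : M * ∫ S, risk ℓ D0 (A n S) ∂P ≤ M * ε n :=
      mul_le_mul_of_nonneg_left hf0_bound hM0.le
    have h2 : ∑ z ∈ Cs.attach, ∫ S, risk ℓ (Dz z.1 z.2) (A n S) ∂P
        ≤ ∑ _z ∈ Cs.attach, ((1 - α) * B + ε n) :=
      Finset.sum_le_sum fun z _ => hfz_bound z.1 z.2
    rw [Finset.sum_const, Finset.card_attach, nsmul_eq_mul] at h2
    linarith
  -- conclude
  have hfin1 : (M + Cs.card) * ε n ≤ δ / 8 := by
    have h1 : (M + Cs.card) * ε n ≤ (M + Cs.card + 1) * ε n := by nlinarith [hε0 n]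
    have h2 : (M + Cs.card + 1) * ε n ≤ (M + Cs.card + 1) * (δ / (8 * (M + Cs.card + 1))) :=
      mul_le_mul_of_nonneg_left hεn.le (by positivity)
    have h3 : (M + Cs.card + 1) * (δ / (8 * (M + Cs.card + 1))) = δ / 8 := by
      field_simp
    linarith
  nlinarith [hα3, hδpos]

end Directions

/-- Theorem 9 / `T13` of the paper.  Let `K = 1` (label `1` = ID,
label `2` = OOD) and let `X` be finite.  Suppose every point can be labeled OOD by some
hypothesis in `H` and the constant ID function `h^in ≡ 1` belongs to `H`.  Then OOD
detection is learnable under risk in the separate space `𝒟^s` for `H` iff `H` contains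
all binary hypotheses except possibly the constant OOD function `h^out ≡ 2`. -/
theorem stmt11 {d : ℕ} (X : Set (EuclideanSpace ℝ (Fin d))) [Finite ↥X]
    (ℓ : ℕ → ℕ → ℝ)
    (hl_nonneg : ∀ y₁ y₂, 0 ≤ ℓ y₁ y₂)
    (hl_zero : ∀ y₁ ∈ Set.Icc 1 2, ∀ y₂ ∈ Set.Icc 1 2, (ℓ y₁ y₂ = 0 ↔ y₁ = y₂))
    (hl_bdd : ∃ B, ∀ y₁ ∈ Set.Icc 1 2, ∀ y₂ ∈ Set.Icc 1 2, ℓ y₁ y₂ ≤ B)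
    (H : Set (↥X → ℕ)) (hH : ∀ h ∈ H, ∀ x, h x = 1 ∨ h x = 2)
    (hsepH : ∀ x : ↥X, ∃ h ∈ H, h x = 2)
    (hin : (fun _ : ↥X => 1) ∈ H) :
    LearnableRisk ℓ (separateSpace ↥X 1) H ↔
      {h : ↥X → ℕ | ∀ x, h x = 1 ∨ h x = 2} \ {fun _ => 2} ⊆ H := by
  letI : Fintype ↥X := Fintype.ofFinite _
  constructor
  · intro hlearn
    exact forward ℓ hl_nonneg hl_zero hl_bdd H hH hsepH hin hlearn
  · intro hsub
    exact backward ℓ hl_nonneg hl_zero hl_bdd H hin hsub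

end OODF

end
end
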